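/- arXiv:1202.6381 — 7 statements merged into one kernel-verified Lean document; each statement's English description precedes it below -/
import Mathlib

section
/- Let a, b, c, d ∈ W satisfy φ_W(φ_W(a)) = a, φ_W(φ_W(b)) = b, φ_W(φ_W(c)) = c, φ_W(φ_W(d)) = d, and write a' = φ_W(a), b' = φ_W(b), c' = φ_W(c), d' = φ_W(d). In the ring of 2×2 matrices over W[[X]][1/p] define Y = [[a + f·c, p·b + f·(d − a) − g·c], [c, d − f·c]] and Z = [[d' − f(X^p)·c', p·c'], [b' + p⁻¹·(f(X^p)·(d' − a') − g(X^p)·c'), a' + f(X^p)·c']]. Then Y·[[X, p], [1, 0]] = [[X, p], [1, 0]]·φ(Z) and Z·[[0, p], [1, 0]] = [[0, p], [1, 0]]·φ(Y). (This says that the explicit matrices of §3.2 solve the window-lifting recursion for deforming endomorphisms along the vertical component.) -/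
noncomputable section

/-- The power series `f = ∑_{n≥0} X^{p^{2n}} ∈ ℤ[[X]]` (for `p ≥ 2` the exponents `p^{2n}`
are pairwise distinct, so the coefficient of `X^k` is `1` if `k = p^{2n}` for some `n`,
and `0` otherwise). -/
def fSeries (p : ℕ) : PowerSeries ℤ :=
  PowerSeries.mk fun k => open Classical in if ∃ n : ℕ, k = p ^ (2 * n) then 1 else 0

/-- The power series `g = ∑_{m≥0} X^{p^{2m}}·(X^{p^{2m}} + 2·∑_{0≤i<m} X^{p^{2i}}) ∈ ℤ[[X]]`:
its coefficient of `X^k` is `1` if `k = 2·p^{2m}` for some `m`, plus `2` if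
`k = p^{2m} + p^{2i}` for some `i < m` (for `p ≥ 2` these exponents are pairwise distinct). -/
def gSeries (p : ℕ) : PowerSeries ℤ :=
  PowerSeries.mk fun k => open Classical in
    (if ∃ m : ℕ, k = 2 * p ^ (2 * m) then 1 else 0) +
      (if ∃ m i : ℕ, i < m ∧ k = p ^ (2 * m) + p ^ (2 * i) then 2 else 0)

/-- `𝔽 = 𝔽_p^alg`, an algebraic closure of the field with `p` elements. -/
abbrev Fbar (p : ℕ) [Fact p.Prime] : Type := AlgebraicClosure (ZMod p)

/-- `W = W(𝔽)`, the ring of Witt vectors of `𝔽`. -/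
abbrev W (p : ℕ) [Fact p.Prime] : Type := WittVector p (Fbar p)

/-- `φ_W : W → W`, the Witt vector Frobenius. -/
abbrev phiW (p : ℕ) [Fact p.Prime] : W p →+* W p := WittVector.frobenius

/-- `W[[X]][1/p]`, the localization of `W[[X]]` away from `p`. -/
abbrev L (p : ℕ) [Fact p.Prime] : Type := Localization.Away ((p : PowerSeries (W p)))

/-- The canonical map `W[[X]] → W[[X]][1/p]`. -/
abbrev iota (p : ℕ) [Fact p.Prime] : PowerSeries (W p) →+* L p := algebraMap _ _

/-- The image of `f` in `W[[X]]`. -/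
def fW (p : ℕ) [Fact p.Prime] : PowerSeries (W p) :=
  PowerSeries.map (Int.castRingHom _) (fSeries p)

/-- The image of `g` in `W[[X]]`. -/
def gW (p : ℕ) [Fact p.Prime] : PowerSeries (W p) :=
  PowerSeries.map (Int.castRingHom _) (gSeries p)

/-- The matrix `Y = [[a + f·c, p·b + f·(d − a) − g·c], [c, d − f·c]]` over `W[[X]][1/p]`. -/
def Ymat (p : ℕ) [Fact p.Prime] (a b c d : W p) : Matrix (Fin 2) (Fin 2) (L p) :=
  !![iota p (PowerSeries.C a + fW p * PowerSeries.C c),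
      iota p ((p : PowerSeries (W p)) * PowerSeries.C b +
        fW p * (PowerSeries.C d - PowerSeries.C a) - gW p * PowerSeries.C c);
    iota p (PowerSeries.C c),
      iota p (PowerSeries.C d - fW p * PowerSeries.C c)]

/-- The matrix `Z = [[d' − f(X^p)·c', p·c'],
[b' + p⁻¹·(f(X^p)·(d' − a') − g(X^p)·c'), a' + f(X^p)·c']]` over `W[[X]][1/p]`, where
`fXp = f(X^p)`, `gXp = g(X^p)` and `pinv = p⁻¹`. -/
def Zmat (p : ℕ) [Fact p.Prime] (fXp gXp : PowerSeries (W p)) (pinv : L p)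
    (a' b' c' d' : W p) : Matrix (Fin 2) (Fin 2) (L p) :=
  !![iota p (PowerSeries.C d' - fXp * PowerSeries.C c'),
      iota p ((p : PowerSeries (W p)) * PowerSeries.C c');
    iota p (PowerSeries.C b') +
        pinv * iota p (fXp * (PowerSeries.C d' - PowerSeries.C a') -
          gXp * PowerSeries.C c'),
      iota p (PowerSeries.C a' + fXp * PowerSeries.C c')]

lemma coeff_f_rec (p : ℕ) (hp : 2 ≤ p) (k : ℕ) :
    PowerSeries.coeff k (fSeries p) =
      (if k = 1 then 1 else 0) +
        (if p ^ 2 ∣ k then PowerSeries.coeff (k / p ^ 2) (fSeries p) else 0) := by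
  classical
  have hp2 : 4 ≤ p ^ 2 := by nlinarith
  have hp2pos : 0 < p ^ 2 := by omega
  simp only [fSeries, PowerSeries.coeff_mk]
  by_cases h1 : k = 1
  · subst h1
    have hno : ¬ p ^ 2 ∣ 1 := by
      intro h; have := Nat.le_of_dvd one_pos h; omega
    have hyes : ∃ n : ℕ, 1 = p ^ (2 * n) := ⟨0, by simp⟩
    simp [hno, hyes]
  · by_cases h2 : p ^ 2 ∣ k
    · obtain ⟨m, rfl⟩ := h2
      rw [Nat.mul_div_cancel_left _ hp2pos]
      have hiff : (∃ n : ℕ, p ^ 2 * m = p ^ (2 * n)) ↔ (∃ n : ℕ, m = p ^ (2 * n)) := by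
        constructor
        · rintro ⟨n, hn⟩
          rcases n with _ | n'
          · exfalso
            simp only [Nat.mul_zero, pow_zero] at hn
            have : p ^ 2 ≤ 1 := Nat.le_of_dvd one_pos ⟨m, hn.symm⟩
            omega
          · refine ⟨n', ?_⟩
            have : p ^ 2 * m = p ^ 2 * p ^ (2 * n') := by
              rw [hn]; ring
            exact Nat.eq_of_mul_eq_mul_left hp2pos this
        · rintro ⟨n, rfl⟩
          exact ⟨n + 1, by ring⟩
      rw [if_congr hiff rfl rfl, if_neg h1, if_pos (Dvd.intro m rfl)]
      ring
    · have hno : ¬ ∃ n : ℕ, k = p ^ (2 * n) := by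
        rintro ⟨n, rfl⟩
        rcases n with _ | n'
        · simp at h1
        · exact h2 (pow_dvd_pow p (by omega : 2 ≤ 2 * (n' + 1)))
      simp [hno, h1, h2]

lemma coeff_g_rec (p : ℕ) (hp : 2 ≤ p) (k : ℕ) :
    PowerSeries.coeff k (gSeries p) =
      2 * (if 1 ≤ k then PowerSeries.coeff (k - 1) (fSeries p) else 0) -
        (if k = 2 then 1 else 0) +
        (if p ^ 2 ∣ k then PowerSeries.coeff (k / p ^ 2) (gSeries p) else 0) := by
  classical
  have hp2 : 4 ≤ p ^ 2 := by nlinarith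
  have hp2pos : 0 < p ^ 2 := by omega
  simp only [fSeries, gSeries, PowerSeries.coeff_mk]
  by_cases h2 : k = 2
  · subst h2
    have hc1 : ∃ m : ℕ, 2 = 2 * p ^ (2 * m) := ⟨0, by simp⟩
    have hc2 : ¬ ∃ m i : ℕ, i < m ∧ 2 = p ^ (2 * m) + p ^ (2 * i) := by
      rintro ⟨m, i, hi, hmi⟩
      have h1 : p ^ 2 ≤ p ^ (2 * m) := Nat.pow_le_pow_right (by omega) (by omega)
      omega
    have hf : ∃ n : ℕ, 2 - 1 = p ^ (2 * n) := ⟨0, by simp⟩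
    have hnd : ¬ p ^ 2 ∣ 2 := by
      intro h; have := Nat.le_of_dvd (by norm_num) h; omega
    simp [hc1, hc2, hf, hnd]
  · by_cases hF : ∃ n : ℕ, 1 ≤ n ∧ k = p ^ (2 * n) + 1
    · obtain ⟨n, hn1, rfl⟩ := hF
      have hpn : p ^ 2 ∣ p ^ (2 * n) := Nat.pow_dvd_pow p (by omega)
      have hppn : p ∣ p ^ (2 * n) := dvd_pow_self p (by omega)
      have hbig : 4 ≤ p ^ (2 * n) := le_trans hp2 (Nat.pow_le_pow_right (by omega) (by omega))
      have hc1 : ¬ ∃ m : ℕ, p ^ (2 * n) + 1 = 2 * p ^ (2 * m) := by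
        rintro ⟨m, hm⟩
        rcases m with _ | m'
        · simp at hm; omega
        · have hpm : p ∣ 2 * p ^ (2 * (m' + 1)) := Dvd.dvd.mul_left (dvd_pow_self p (by omega)) 2
          rw [← hm] at hpm
          have h1 : p ∣ 1 := (Nat.dvd_add_right hppn).mp hpm
          have := Nat.le_of_dvd one_pos h1
          omega
      have hc2 : ∃ m i : ℕ, i < m ∧ p ^ (2 * n) + 1 = p ^ (2 * m) + p ^ (2 * i) := by
        exact ⟨n, 0, by omega, by simp⟩
      have hf : ∃ n' : ℕ, p ^ (2 * n) + 1 - 1 = p ^ (2 * n') := ⟨n, by omega⟩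
      have hnd : ¬ p ^ 2 ∣ p ^ (2 * n) + 1 := by
        intro h
        have : p ^ 2 ∣ 1 := (Nat.dvd_add_right hpn).mp h
        have := Nat.le_of_dvd one_pos this; omega
      have hk1 : 1 ≤ p ^ (2 * n) + 1 := by omega
      have hx : ∃ n1 : ℕ, p ^ (2 * n) = p ^ (2 * n1) := ⟨n, rfl⟩
      have hy : p ^ (2 * n) ≠ 1 := by omega
      simp [hc1, hc2, hf, hnd, hk1, hx, hy, show ¬ (p = 1 ∨ n = 0) by omega]
    · -- case B
      have hfz : (if 1 ≤ k then (if ∃ n : ℕ, k - 1 = p ^ (2 * n) then (1:ℤ) else 0) else 0) = 0 := by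
        rcases Nat.eq_zero_or_pos k with hk | hk
        · simp [hk]
        · rw [if_pos (show 1 ≤ k by omega), if_neg]
          rintro ⟨n, hn⟩
          rcases n with _ | n'
          · simp at hn; omega
          · exact hF ⟨n' + 1, by omega, by omega⟩
      rw [hfz, if_neg h2]
      by_cases hd : p ^ 2 ∣ k
      · obtain ⟨m', rfl⟩ := hd
        rw [Nat.mul_div_cancel_left _ hp2pos, if_pos (Dvd.intro m' rfl)]
        have iff1 : (∃ m : ℕ, p ^ 2 * m' = 2 * p ^ (2 * m)) ↔ (∃ m : ℕ, m' = 2 * p ^ (2 * m)) := by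
          constructor
          · rintro ⟨m, hm⟩
            rcases m with _ | m''
            · exfalso
              simp only [Nat.mul_zero, pow_zero, mul_one] at hm
              have : p ^ 2 ≤ 2 := Nat.le_of_dvd (by norm_num) ⟨m', hm.symm⟩
              omega
            · refine ⟨m'', Nat.eq_of_mul_eq_mul_left hp2pos ?_⟩
              rw [hm]
              rw [show 2 * (m'' + 1) = 2 + 2 * m'' by ring, pow_add]
              ring
          · rintro ⟨m, rfl⟩
            refine ⟨m + 1, ?_⟩
            rw [show 2 * (m + 1) = 2 + 2 * m by ring, pow_add]
            ring
        have iff2 : (∃ m i : ℕ, i < m ∧ p ^ 2 * m' = p ^ (2 * m) + p ^ (2 * i)) ↔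
            (∃ m i : ℕ, i < m ∧ m' = p ^ (2 * m) + p ^ (2 * i)) := by
          constructor
          · rintro ⟨m, i, hi, hmi⟩
            rcases i with _ | i'
            · exfalso
              have hpm : p ^ 2 ∣ p ^ (2 * m) := Nat.pow_dvd_pow p (by omega)
              have hdk : p ^ 2 ∣ p ^ (2 * m) + 1 := by
                rw [show p ^ (2 * 0) = 1 by simp] at hmi
                exact hmi ▸ Dvd.intro m' rfl
              have : p ^ 2 ∣ 1 := (Nat.dvd_add_right hpm).mp hdk
              have := Nat.le_of_dvd one_pos this; omega
            · refine ⟨m - 1, i', by omega, Nat.eq_of_mul_eq_mul_left hp2pos ?_⟩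
              rw [hmi, show 2 * m = 2 + 2 * (m - 1) by omega,
                show 2 * (i' + 1) = 2 + 2 * i' by ring, pow_add, pow_add]
              ring
          · rintro ⟨m, i, hi, rfl⟩
            refine ⟨m + 1, i + 1, by omega, ?_⟩
            rw [show 2 * (m + 1) = 2 + 2 * m by ring,
              show 2 * (i + 1) = 2 + 2 * i by ring, pow_add, pow_add]
            ring
        rw [if_congr iff1 rfl rfl, if_congr iff2 rfl rfl]
        ring
      · rw [if_neg hd]
        have hc1 : ¬ ∃ m : ℕ, k = 2 * p ^ (2 * m) := by
          rintro ⟨m, rfl⟩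
          rcases m with _ | m'
          · simp at h2
          · exact hd ((Nat.pow_dvd_pow p (by omega : 2 ≤ 2 * (m' + 1))).mul_left 2)
        have hc2 : ¬ ∃ m i : ℕ, i < m ∧ k = p ^ (2 * m) + p ^ (2 * i) := by
          rintro ⟨m, i, hi, rfl⟩
          rcases i with _ | i'
          · exact hF ⟨m, by omega, by simp⟩
          · exact hd (Nat.dvd_add (Nat.pow_dvd_pow p (by omega)) (Nat.pow_dvd_pow p (by omega)))
        simp [hc1, hc2]


set_option maxHeartbeats 1600000 in
/-- Let `a, b, c, d ∈ W` be fixed by `φ_W²`, let `Y` and `Z` be the explicit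
matrices of §3.2 of the paper (built from `f`, `g`, `f(X^p)`, `g(X^p)` and
`a' = φ_W(a)`, …, `d' = φ_W(d)`), and let `φ` be the ring endomorphism of `W[[X]]` acting as
`φ_W` on coefficients and sending `X` to `X^p` (characterized by its effect on coefficients),
together with its unique extension `φ_L` to `W[[X]][1/p]`.  Then
`Y·[[X, p], [1, 0]] = [[X, p], [1, 0]]·φ(Z)` and `Z·[[0, p], [1, 0]] = [[0, p], [1, 0]]·φ(Y)`,
`φ` being applied to matrices entrywise. -/
theorem statement_0 (p : ℕ) [Fact p.Prime]
    (a b c d : W p)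
    (ha : phiW p (phiW p a) = a) (hb : phiW p (phiW p b) = b)
    (hc : phiW p (phiW p c) = c) (hd : phiW p (phiW p d) = d)
    -- `Φ` is the ring endomorphism `φ` of `W[[X]]`, `F(X) ↦ F^{φ_W}(X^p)`:
    (Φ : PowerSeries (W p) →+* PowerSeries (W p))
    (hΦ₁ : ∀ (F : PowerSeries (W p)) (k : ℕ),
      PowerSeries.coeff (p * k) (Φ F) = phiW p (PowerSeries.coeff k F))
    (hΦ₂ : ∀ (F : PowerSeries (W p)) (k : ℕ), ¬ p ∣ k → PowerSeries.coeff k (Φ F) = 0)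
    -- `ΦL` is the unique extension of `φ` to the localization `W[[X]][1/p]`:
    (ΦL : L p →+* L p)
    (hΦL : ∀ F : PowerSeries (W p), ΦL (iota p F) = iota p (Φ F))
    -- `pinv` is the inverse `p⁻¹` in `W[[X]][1/p]`:
    (pinv : L p) (hpinv : iota p ((p : PowerSeries (W p))) * pinv = 1)
    -- `fXp = f(X^p)` and `gXp = g(X^p)`, the substitutions `X ↦ X^p` in `f` and `g`:
    (fXp gXp : PowerSeries (W p))
    (hfXp₁ : ∀ k : ℕ, PowerSeries.coeff (p * k) fXp = PowerSeries.coeff k (fW p))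
    (hfXp₂ : ∀ k : ℕ, ¬ p ∣ k → PowerSeries.coeff k fXp = 0)
    (hgXp₁ : ∀ k : ℕ, PowerSeries.coeff (p * k) gXp = PowerSeries.coeff k (gW p))
    (hgXp₂ : ∀ k : ℕ, ¬ p ∣ k → PowerSeries.coeff k gXp = 0) :
    Ymat p a b c d * !![iota p PowerSeries.X, iota p ((p : PowerSeries (W p))); 1, 0] =
      !![iota p PowerSeries.X, iota p ((p : PowerSeries (W p))); 1, 0] *
        (Zmat p fXp gXp pinv (phiW p a) (phiW p b) (phiW p c) (phiW p d)).map ⇑ΦL ∧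
    Zmat p fXp gXp pinv (phiW p a) (phiW p b) (phiW p c) (phiW p d) *
        !![0, iota p ((p : PowerSeries (W p))); 1, 0] =
      !![0, iota p ((p : PowerSeries (W p))); 1, 0] * (Ymat p a b c d).map ⇑ΦL := by

  classical
  have hp : 2 ≤ p := (Fact.out : p.Prime).two_le
  have hp2pos : 0 < p ^ 2 := by positivity
  have hΦC : ∀ x : W p, Φ (PowerSeries.C x) = PowerSeries.C (phiW p x) := by
    intro x
    ext k
    by_cases hk : p ∣ k
    · obtain ⟨m, rfl⟩ := hk
      rw [hΦ₁, PowerSeries.coeff_C, PowerSeries.coeff_C]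
      by_cases hm : m = 0
      · subst hm; simp
      · rw [if_neg hm, if_neg (by positivity), map_zero]
    · rw [hΦ₂ _ _ hk, PowerSeries.coeff_C, if_neg]
      rintro rfl; exact hk (dvd_zero p)
  have hfixf : ∀ m : ℕ, phiW p (PowerSeries.coeff m (fW p)) = PowerSeries.coeff m (fW p) := by
    intro m
    rw [fW, PowerSeries.coeff_map]
    exact map_intCast (phiW p) _
  have hfixg : ∀ m : ℕ, phiW p (PowerSeries.coeff m (gW p)) = PowerSeries.coeff m (gW p) := by
    intro m
    rw [gW, PowerSeries.coeff_map]
    exact map_intCast (phiW p) _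
  have hΦf : Φ (fW p) = fXp := by
    ext k
    by_cases hk : p ∣ k
    · obtain ⟨m, rfl⟩ := hk
      rw [hΦ₁, hfXp₁, hfixf]
    · rw [hΦ₂ _ _ hk, hfXp₂ _ hk]
  have hΦg : Φ (gW p) = gXp := by
    ext k
    by_cases hk : p ∣ k
    · obtain ⟨m, rfl⟩ := hk
      rw [hΦ₁, hgXp₁, hfixg]
    · rw [hΦ₂ _ _ hk, hgXp₂ _ hk]
  have hf2 : ∀ k : ℕ, PowerSeries.coeff k (Φ fXp) =
      if p ^ 2 ∣ k then PowerSeries.coeff (k / p ^ 2) (fW p) else 0 := by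
    intro k
    by_cases hk2 : p ^ 2 ∣ k
    · obtain ⟨m, rfl⟩ := hk2
      rw [if_pos (Dvd.intro m rfl), Nat.mul_div_cancel_left _ hp2pos,
        show p ^ 2 * m = p * (p * m) by ring, hΦ₁, hfXp₁, hfixf]
    · rw [if_neg hk2]
      by_cases hk : p ∣ k
      · obtain ⟨j, rfl⟩ := hk
        have hj : ¬ p ∣ j := by
          rintro ⟨t, rfl⟩; exact hk2 ⟨t, by ring⟩
        rw [hΦ₁, hfXp₂ _ hj, map_zero]
      · exact hΦ₂ _ _ hk
  have hg2 : ∀ k : ℕ, PowerSeries.coeff k (Φ gXp) =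
      if p ^ 2 ∣ k then PowerSeries.coeff (k / p ^ 2) (gW p) else 0 := by
    intro k
    by_cases hk2 : p ^ 2 ∣ k
    · obtain ⟨m, rfl⟩ := hk2
      rw [if_pos (Dvd.intro m rfl), Nat.mul_div_cancel_left _ hp2pos,
        show p ^ 2 * m = p * (p * m) by ring, hΦ₁, hgXp₁, hfixg]
    · rw [if_neg hk2]
      by_cases hk : p ∣ k
      · obtain ⟨j, rfl⟩ := hk
        have hj : ¬ p ∣ j := by
          rintro ⟨t, rfl⟩; exact hk2 ⟨t, by ring⟩
        rw [hΦ₁, hgXp₂ _ hj, map_zero]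
      · exact hΦ₂ _ _ hk
  have hfeq : Φ fXp = fW p - PowerSeries.X := by
    have key : fW p = PowerSeries.X + Φ fXp := by
      refine PowerSeries.ext fun k => ?_
      rw [map_add, hf2, PowerSeries.coeff_X]
      simp only [fW, PowerSeries.coeff_map, eq_intCast]
      rw [coeff_f_rec p hp k]
      push_cast [apply_ite (Int.cast : ℤ → W p)]
      ring
    rw [key]; ring
  have hXmul : ∀ k : ℕ, PowerSeries.coeff k (PowerSeries.X * fW p) =
      if 1 ≤ k then PowerSeries.coeff (k - 1) (fW p) else 0 := by
    intro k
    rcases k with _ | n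
    · simp
    · rw [PowerSeries.coeff_succ_X_mul, if_pos (by omega)]
      norm_num
  have hgeq : Φ gXp = gW p - (PowerSeries.X * fW p + PowerSeries.X * fW p)
      + PowerSeries.X ^ 2 := by
    have key : gW p = (PowerSeries.X * fW p + PowerSeries.X * fW p)
        - PowerSeries.X ^ 2 + Φ gXp := by
      refine PowerSeries.ext fun k => ?_
      rw [map_add, map_sub, map_add, hXmul, hg2, PowerSeries.coeff_X_pow]
      simp only [gW, fW, PowerSeries.coeff_map, eq_intCast]
      rw [coeff_g_rec p hp k]
      push_cast [apply_ite (Int.cast : ℤ → W p)]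
      ring
    rw [key]; ring
  have hΦp : Φ ((p : PowerSeries (W p))) = (p : PowerSeries (W p)) := map_natCast Φ p
  have hΦLpinv : ΦL pinv = pinv := by
    have h1 : iota p ((p : PowerSeries (W p))) * ΦL pinv = 1 := by
      rw [show iota p ((p : PowerSeries (W p))) = ΦL (iota p ((p : PowerSeries (W p)))) by
        rw [hΦL, hΦp], ← map_mul, hpinv, map_one]
    calc ΦL pinv = (iota p ((p : PowerSeries (W p))) * pinv) * ΦL pinv := by rw [hpinv, one_mul]
      _ = pinv * (iota p ((p : PowerSeries (W p))) * ΦL pinv) := by ring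
      _ = pinv := by rw [h1, mul_one]
  constructor
  · ext i j
    fin_cases i <;> fin_cases j <;>
      · simp only [Ymat, Zmat, Matrix.mul_apply, Fin.sum_univ_two, Matrix.map_apply,
          Matrix.cons_val', Matrix.cons_val_zero, Matrix.cons_val_one, Matrix.head_cons,
          Matrix.head_fin_const, Matrix.empty_val', Matrix.cons_val_fin_one, Fin.isValue,
          Fin.zero_eta, Fin.mk_one, Matrix.of_apply, map_add, map_sub, map_mul, map_pow, map_one, map_zero,
          hΦL, hΦC, hΦf, hΦg, hΦp, hΦLpinv, ha, hb, hc, hd, hfeq, hgeq,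
          one_mul, mul_one, mul_zero, zero_mul, add_zero, zero_add]
        try first
        | ring1
        | linear_combination ((iota p (fW p) - iota p PowerSeries.X) *
              (iota p (PowerSeries.C d) - iota p (PowerSeries.C a)) -
            (iota p (gW p) - (iota p PowerSeries.X * iota p (fW p) +
              iota p PowerSeries.X * iota p (fW p)) + iota p PowerSeries.X ^ 2) *
              iota p (PowerSeries.C c)) * hpinv
        | linear_combination (-((iota p (fW p) - iota p PowerSeries.X) *
              (iota p (PowerSeries.C d) - iota p (PowerSeries.C a)) -
            (iota p (gW p) - (iota p PowerSeries.X * iota p (fW p) +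
              iota p PowerSeries.X * iota p (fW p)) + iota p PowerSeries.X ^ 2) *
              iota p (PowerSeries.C c))) * hpinv
  · ext i j
    fin_cases i <;> fin_cases j <;>
      · simp only [Ymat, Zmat, Matrix.mul_apply, Fin.sum_univ_two, Matrix.map_apply,
          Matrix.cons_val', Matrix.cons_val_zero, Matrix.cons_val_one, Matrix.head_cons,
          Matrix.head_fin_const, Matrix.empty_val', Matrix.cons_val_fin_one, Fin.isValue,
          Fin.zero_eta, Fin.mk_one, Matrix.of_apply, map_add, map_sub, map_mul, map_pow, map_one, map_zero,
          hΦL, hΦC, hΦf, hΦg, hΦp, hΦLpinv, ha, hb, hc, hd,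
          one_mul, mul_one, mul_zero, zero_mul, add_zero, zero_add]
        try first
        | ring1
        | linear_combination (iota p fXp * (iota p (PowerSeries.C (phiW p d)) -
              iota p (PowerSeries.C (phiW p a))) -
            iota p gXp * iota p (PowerSeries.C (phiW p c))) * hpinv
        | linear_combination (-(iota p fXp * (iota p (PowerSeries.C (phiW p d)) -
              iota p (PowerSeries.C (phiW p a))) -
            iota p gXp * iota p (PowerSeries.C (phiW p c)))) * hpinv


end
end

section
/- Let a, b, c, d ∈ W satisfy φ_W(φ_W(a)) = a, φ_W(φ_W(b)) = b, φ_W(φ_W(c)) = c, φ_W(φ_W(d)) = d, and write a' = φ_W(a), b' = φ_W(b), c' = φ_W(c), d' = φ_W(d). In the ring of 2×2 matrices over W[[X]][1/p] define Y = [[a + f·c, p·b + f·(d − a) − g·c], [c, d − f·c]] and Z = [[d' − f(X^p)·c', p·c'], [b' + p⁻¹·(f(X^p)·(d' − a') − g(X^p)·c'), a' + f(X^p)·c']]. Then the following are equivalent: (i) every entry of Y and of Z lies in W[[X]], and the upper-right entries of Y and of Z lie in p·W[[X]]; (ii) a − d ∈ p·W and c ∈ p·W. (This is the integrality criterion for the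 lifted quasi-endomorphism in §3.2.) -/
noncomputable section

section Aux

variable (p : ℕ) [Fact p.Prime]

lemma pW_ne_zero : (p : W p) ≠ 0 := WittVector.p_nonzero p _

lemma pPS_ne_zero : (p : PowerSeries (W p)) ≠ 0 := by
  intro h
  apply pW_ne_zero p
  have := congrArg (PowerSeries.constantCoeff (R := W p)) h
  simpa using this

lemma iota_inj : Function.Injective (iota p) :=
  IsLocalization.injective (L p)
    (Submonoid.powers_le.mpr (mem_nonZeroDivisors_of_ne_zero (pPS_ne_zero p)))

lemma pPS_eq_C : (p : PowerSeries (W p)) = PowerSeries.C (R := W p) (p : W p) :=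
  (map_natCast (PowerSeries.C (R := W p)) p).symm

lemma dvd_of_coeff_dvd {F : PowerSeries (W p)}
    (h : ∀ k, (p : W p) ∣ PowerSeries.coeff k F) :
    (p : PowerSeries (W p)) ∣ F := by
  refine ⟨PowerSeries.mk fun k => (h k).choose, PowerSeries.ext fun k => ?_⟩
  rw [pPS_eq_C, PowerSeries.coeff_C_mul, PowerSeries.coeff_mk]
  exact (h k).choose_spec

lemma coeff_dvd_of_dvd {F : PowerSeries (W p)}
    (h : (p : PowerSeries (W p)) ∣ F) (k : ℕ) :
    (p : W p) ∣ PowerSeries.coeff k F := by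
  obtain ⟨G, hG⟩ := h
  exact ⟨PowerSeries.coeff k G, by
    rw [hG, pPS_eq_C, PowerSeries.coeff_C_mul]⟩

lemma coeff_fW_one : PowerSeries.coeff 1 (fW p) = 1 := by
  rw [fW, PowerSeries.coeff_map, fSeries, PowerSeries.coeff_mk]
  rw [if_pos ⟨0, by simp⟩]
  simp

lemma coeff_gW_one : PowerSeries.coeff 1 (gW p) = 0 := by
  have hp2 : 2 ≤ p := (Fact.out : p.Prime).two_le
  rw [gW, PowerSeries.coeff_map, gSeries, PowerSeries.coeff_mk]
  rw [if_neg, if_neg]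
  · simp
  · rintro ⟨m, i, -, hmi⟩
    have h1 : 1 ≤ p ^ (2 * m) := Nat.one_le_pow _ _ (by omega)
    have h2 : 1 ≤ p ^ (2 * i) := Nat.one_le_pow _ _ (by omega)
    omega
  · rintro ⟨m, hm⟩
    have h1 : 1 ≤ p ^ (2 * m) := Nat.one_le_pow _ _ (by omega)
    omega

lemma coeff_fW_two : PowerSeries.coeff 2 (fW p) = 0 := by
  have hp2 : 2 ≤ p := (Fact.out : p.Prime).two_le
  rw [fW, PowerSeries.coeff_map, fSeries, PowerSeries.coeff_mk]
  rw [if_neg]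
  · simp
  · rintro ⟨n, hn⟩
    rcases Nat.eq_zero_or_pos n with h | h
    · simp [h] at hn
    · have h1 : p ^ 2 ≤ p ^ (2 * n) := Nat.pow_le_pow_right (by omega) (by omega)
      have h2 : 4 ≤ p ^ 2 := by nlinarith
      omega

lemma coeff_gW_two : PowerSeries.coeff 2 (gW p) = 1 := by
  have hp2 : 2 ≤ p := (Fact.out : p.Prime).two_le
  rw [gW, PowerSeries.coeff_map, gSeries, PowerSeries.coeff_mk]
  rw [if_pos ⟨0, by simp⟩, if_neg]
  · simp
  · rintro ⟨m, i, him, hmi⟩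
    have h1 : p ^ 2 ≤ p ^ (2 * m) := Nat.pow_le_pow_right (by omega) (by omega)
    have h2 : 4 ≤ p ^ 2 := by nlinarith
    have h3 : 1 ≤ p ^ (2 * i) := Nat.one_le_pow _ _ (by omega)
    omega

end Aux

/-- With `Y` and `Z` the explicit matrices of §3.2 of the paper (built from
`f`, `g`, `f(X^p)`, `g(X^p)` and `a' = φ_W(a)`, …, `d' = φ_W(d)`, for `a, b, c, d ∈ W` fixed
by `φ_W²`), the following are equivalent: (i) every entry of `Y` and of `Z` lies in `W[[X]]`
and the upper-right entries of `Y` and of `Z` lie in `p·W[[X]]`; (ii) `a − d ∈ p·W` and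
`c ∈ p·W`. -/
theorem statement_1 (p : ℕ) [Fact p.Prime]
    (a b c d : W p)
    (ha : phiW p (phiW p a) = a) (hb : phiW p (phiW p b) = b)
    (hc : phiW p (phiW p c) = c) (hd : phiW p (phiW p d) = d)
    -- `pinv` is the inverse `p⁻¹` in `W[[X]][1/p]`:
    (pinv : L p) (hpinv : iota p ((p : PowerSeries (W p))) * pinv = 1)
    -- `fXp = f(X^p)` and `gXp = g(X^p)`, the substitutions `X ↦ X^p` in `f` and `g`:
    (fXp gXp : PowerSeries (W p))
    (hfXp₁ : ∀ k : ℕ, PowerSeries.coeff (p * k) fXp = PowerSeries.coeff k (fW p))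
    (hfXp₂ : ∀ k : ℕ, ¬ p ∣ k → PowerSeries.coeff k fXp = 0)
    (hgXp₁ : ∀ k : ℕ, PowerSeries.coeff (p * k) gXp = PowerSeries.coeff k (gW p))
    (hgXp₂ : ∀ k : ℕ, ¬ p ∣ k → PowerSeries.coeff k gXp = 0) :
    ((∀ i j, Ymat p a b c d i j ∈ Set.range (iota p)) ∧
      (∀ i j, Zmat p fXp gXp pinv (phiW p a) (phiW p b) (phiW p c) (phiW p d) i j ∈
        Set.range (iota p)) ∧
      (∃ u : PowerSeries (W p), Ymat p a b c d 0 1 = iota p ((p : PowerSeries (W p)) * u)) ∧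
      (∃ v : PowerSeries (W p),
        Zmat p fXp gXp pinv (phiW p a) (phiW p b) (phiW p c) (phiW p d) 0 1 =
          iota p ((p : PowerSeries (W p)) * v))) ↔
      ((p : W p) ∣ (a - d) ∧ (p : W p) ∣ c) := by
  have hC : ∀ x y : W p, PowerSeries.C (R := W p) x - PowerSeries.C (R := W p) y
      = PowerSeries.C (R := W p) (x - y) := fun x y => (map_sub (PowerSeries.C (R := W p)) x y).symm
  have h01 : Ymat p a b c d 0 1 = iota p ((p : PowerSeries (W p)) * PowerSeries.C b +
      fW p * (PowerSeries.C d - PowerSeries.C a) - gW p * PowerSeries.C c) := by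
    simp [Ymat]
  constructor
  · rintro ⟨-, -, ⟨u, hu⟩, -⟩
    have heq := iota_inj p (h01.symm.trans hu)
    have hdvd : (p : PowerSeries (W p)) ∣
        fW p * (PowerSeries.C d - PowerSeries.C a) - gW p * PowerSeries.C c :=
      ⟨u - PowerSeries.C b, by rw [mul_sub]; linear_combination heq⟩
    have hcoeff := coeff_dvd_of_dvd p hdvd
    have e1 := hcoeff 1
    rw [map_sub, hC, PowerSeries.coeff_mul_C, PowerSeries.coeff_mul_C,
      coeff_fW_one, coeff_gW_one] at e1
    have e2 := hcoeff 2
    rw [map_sub, hC, PowerSeries.coeff_mul_C, PowerSeries.coeff_mul_C,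
      coeff_fW_two, coeff_gW_two] at e2
    constructor
    · exact dvd_sub_comm.mp (by simpa using e1)
    · exact dvd_neg.mp (by simpa using e2)
  · rintro ⟨had, hcd⟩
    have hda : (p : W p) ∣ d - a := dvd_sub_comm.mp had
    have hYd : (p : PowerSeries (W p)) ∣
        fW p * (PowerSeries.C d - PowerSeries.C a) - gW p * PowerSeries.C c := by
      apply dvd_of_coeff_dvd
      intro k
      rw [map_sub, hC, PowerSeries.coeff_mul_C, PowerSeries.coeff_mul_C]
      exact dvd_sub (hda.mul_left _) (hcd.mul_left _)
    obtain ⟨w, hw⟩ := hYd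
    have hd'a' : (p : W p) ∣ phiW p d - phiW p a := by
      obtain ⟨s, hs⟩ := hda
      exact ⟨phiW p s, by rw [← map_sub, hs, map_mul, map_natCast]⟩
    have hc' : (p : W p) ∣ phiW p c := by
      obtain ⟨t, ht⟩ := hcd
      exact ⟨phiW p t, by rw [ht, map_mul, map_natCast]⟩
    have hZd : (p : PowerSeries (W p)) ∣
        fXp * (PowerSeries.C (phiW p d) - PowerSeries.C (phiW p a)) -
          gXp * PowerSeries.C (phiW p c) := by
      apply dvd_of_coeff_dvd
      intro k
      rw [map_sub, hC, PowerSeries.coeff_mul_C, PowerSeries.coeff_mul_C]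
      exact dvd_sub (hd'a'.mul_left _) (hc'.mul_left _)
    obtain ⟨z, hz⟩ := hZd
    have hZ10 : Zmat p fXp gXp pinv (phiW p a) (phiW p b) (phiW p c) (phiW p d) 1 0
        = iota p (PowerSeries.C (phiW p b)) +
          pinv * iota p (fXp * (PowerSeries.C (phiW p d) - PowerSeries.C (phiW p a)) -
            gXp * PowerSeries.C (phiW p c)) := by
      simp [Zmat]
    refine ⟨?_, ?_, ?_, ?_⟩
    · intro i j
      fin_cases i <;> fin_cases j <;>
        · simp only [Ymat, Fin.isValue, Matrix.cons_val', Matrix.cons_val_zero,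
            Matrix.cons_val_one, Matrix.head_cons, Matrix.empty_val',
            Matrix.cons_val_fin_one, Matrix.head_fin_const, Matrix.of_apply]
          exact Set.mem_range_self _
    · intro i j
      fin_cases i <;> fin_cases j
      · simp only [Zmat, Fin.isValue, Matrix.cons_val', Matrix.cons_val_zero,
          Matrix.cons_val_one, Matrix.head_cons, Matrix.empty_val',
          Matrix.cons_val_fin_one, Matrix.head_fin_const, Matrix.of_apply]
        exact Set.mem_range_self _
      · simp only [Zmat, Fin.isValue, Matrix.cons_val', Matrix.cons_val_zero,
          Matrix.cons_val_one, Matrix.head_cons, Matrix.empty_val',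
          Matrix.cons_val_fin_one, Matrix.head_fin_const, Matrix.of_apply]
        exact Set.mem_range_self _
      · show Zmat p fXp gXp pinv (phiW p a) (phiW p b) (phiW p c) (phiW p d) 1 0 ∈
            Set.range (iota p)
        rw [hZ10, hz, map_mul]
        have hcan : pinv * (iota p ((p : PowerSeries (W p))) * iota p z) = iota p z := by
          rw [← mul_assoc, mul_comm pinv, hpinv, one_mul]
        rw [hcan, ← map_add]
        exact Set.mem_range_self _
      · simp only [Zmat, Fin.isValue, Matrix.cons_val', Matrix.cons_val_zero,
          Matrix.cons_val_one, Matrix.head_cons, Matrix.empty_val',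
          Matrix.cons_val_fin_one, Matrix.head_fin_const, Matrix.of_apply]
        exact Set.mem_range_self _
    · refine ⟨PowerSeries.C b + w, ?_⟩
      rw [h01]
      congr 1
      rw [mul_add, ← hw]
      ring
    · exact ⟨PowerSeries.C (phiW p c), by simp [Zmat]⟩


end
end

section
/- Let u ∈ W satisfy φ_W(φ_W(u)) = u, set ū = φ_W(u) and U = u − ū. In the ring of 2×2 matrices over W[[X₁,X₂]][1/p] set Y₀ = [[u, −U·f(X₁)], [0, ū]] and Z₀ = [[u, 0], [p⁻¹·U·f(X₁^p), ū]], and define Y[1] = p⁻¹·[[X₁, p], [1, 0]]·φ(Z₀)·[[0, p], [1, −X₁]] and Z[1] = p⁻¹·[[X₂, p], [1, 0]]·φ(Y₀)·[[0, p], [1, −X₂]]. Then Y[1] = Y₀ and p·(Z[1] − Z₀) = U·[[X₂·f(X₁^p), −p·X₂ − X₂²·f(X₁^p)], [0, −X₂·f(X₁^p)]]. (This is the explicit first step of the two-variable recursion in the unramified case of §3.3: Y₁ = 0 and Z₁ is as displayed.) -/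
noncomputable section

/-- `W[[X₁,X₂]]`, the formal power series ring in two variables over `W`. -/
abbrev Mv (p : ℕ) [Fact p.Prime] : Type := MvPowerSeries (Fin 2) (W p)

/-- The constant-series embedding `W → W[[X₁,X₂]]`. -/
abbrev CMv (p : ℕ) [Fact p.Prime] : W p →+* Mv p := MvPowerSeries.C

/-- `G` is the evaluation `F(X₁^e)` of a one-variable integral power series `F` at `X₁^e`
inside `W[[X₁,X₂]]` (characterized by coefficients: the coefficient of `X₁^{e·k}` in `G` is
the `k`-th coefficient of `F`, and all other coefficients of `G` vanish). -/
def IsEvalAtX1Pow (p : ℕ) [Fact p.Prime] (e : ℕ) (F : PowerSeries ℤ) (G : Mv p) : Prop :=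
  (∀ k : ℕ, MvPowerSeries.coeff (Finsupp.single 0 (e * k)) G =
      ((PowerSeries.coeff k F : ℤ) : W p)) ∧
    (∀ d : Fin 2 →₀ ℕ, d 1 ≠ 0 → MvPowerSeries.coeff d G = 0) ∧
    (∀ k : ℕ, ¬ e ∣ k → MvPowerSeries.coeff (Finsupp.single 0 k) G = 0)

/-- `W[[X₁,X₂]][1/p]`, the localization of `W[[X₁,X₂]]` away from `p`. -/
abbrev L2 (p : ℕ) [Fact p.Prime] : Type := Localization.Away ((p : Mv p))

/-- The canonical map `W[[X₁,X₂]] → W[[X₁,X₂]][1/p]`. -/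
abbrev iota2 (p : ℕ) [Fact p.Prime] : Mv p →+* L2 p := algebraMap _ _

set_option linter.unusedSectionVars false
namespace S3

variable {p : ℕ} [Fact p.Prime]

lemma pne : p ≠ 0 := (Fact.out : p.Prime).ne_zero

lemma single_pmul (m : ℕ) :
    (Finsupp.single (0:Fin 2) (p * m)) = p • Finsupp.single (0:Fin 2) m := by
  rw [Finsupp.smul_single, smul_eq_mul]

lemma eq_single_of_snd_zero {d : Fin 2 →₀ ℕ} (h : d 1 = 0) :
    d = Finsupp.single 0 (d 0) := by
  ext i
  fin_cases i <;> simp [Finsupp.single_apply, h]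

lemma smul_eq_zero_iff {e : Fin 2 →₀ ℕ} : p • e = 0 ↔ e = 0 := by
  constructor
  · intro h
    ext i
    have := congrFun (congrArg (fun f : Fin 2 →₀ ℕ => (f : Fin 2 → ℕ)) h) i
    simp only [Finsupp.smul_apply, smul_eq_mul, Finsupp.coe_zero, Pi.zero_apply] at this
    exact (Nat.mul_eq_zero.mp this).resolve_left pne
  · rintro rfl; simp

lemma single_eq_smul_iff {k : ℕ} {e : Fin 2 →₀ ℕ}
    (h : Finsupp.single (0:Fin 2) k = p • e) : p ∣ k ∧ e = Finsupp.single 0 (k / p) := by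
  have h1 : e 1 = 0 := by
    have := congrFun (congrArg (fun f : Fin 2 →₀ ℕ => (f : Fin 2 → ℕ)) h) 1
    simp only [Finsupp.smul_apply, smul_eq_mul, Finsupp.single_apply] at this
    have : 0 = p * e 1 := by simpa using this
    exact ((Nat.mul_eq_zero.mp this.symm).resolve_left pne)
  have h0 : k = p * e 0 := by
    have := congrFun (congrArg (fun f : Fin 2 →₀ ℕ => (f : Fin 2 → ℕ)) h) 0
    simpa [Finsupp.single_apply] using this
  refine ⟨⟨e 0, h0⟩, ?_⟩
  rw [eq_single_of_snd_zero h1, h0, Nat.mul_div_cancel_left _ (Nat.pos_of_ne_zero pne)]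

lemma exists_pow_iff {m : ℕ} : (∃ n, p^2 * m = p^(2*n)) ↔ ∃ n, m = p^(2*n) := by
  constructor
  · rintro ⟨n, hn⟩
    rcases n with _ | n'
    · exfalso
      have : p^2 * m = 1 := by simpa using hn
      have : p^2 ≤ 1 := Nat.le_of_dvd one_pos ⟨m, this.symm⟩
      have h2 : 2 ≤ p := (Fact.out : p.Prime).two_le
      nlinarith
    · refine ⟨n', ?_⟩
      have hp2 : (0:ℕ) < p^2 := pow_pos (Nat.pos_of_ne_zero pne) 2
      have : p^2 * m = p^2 * p^(2*n') := by
        rw [hn, ← pow_add]; ring_nf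
      exact Nat.eq_of_mul_eq_mul_left hp2 this
  · rintro ⟨n, rfl⟩
    exact ⟨n+1, by rw [← pow_add]; ring_nf⟩

end S3

namespace S3b
open S3
variable {p : ℕ} [Fact p.Prime]
variable (Φ : Mv p →+* Mv p)
  (hΦ₁ : ∀ (F : Mv p) (d : Fin 2 →₀ ℕ),
    MvPowerSeries.coeff (p • d) (Φ F) = phiW p (MvPowerSeries.coeff d F))
  (hΦ₂ : ∀ (F : Mv p) (d : Fin 2 →₀ ℕ),
    (¬ ∃ e : Fin 2 →₀ ℕ, d = p • e) → MvPowerSeries.coeff d (Φ F) = 0)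

include hΦ₁ hΦ₂

lemma phiC (a : W p) : Φ (CMv p a) = CMv p (phiW p a) := by
  apply MvPowerSeries.ext; intro d
  by_cases hde : ∃ e : Fin 2 →₀ ℕ, d = p • e
  · obtain ⟨e, rfl⟩ := hde
    rw [hΦ₁, MvPowerSeries.coeff_C, MvPowerSeries.coeff_C]
    by_cases he : e = 0
    · subst he; simp
    · rw [if_neg he, if_neg (fun h => he (smul_eq_zero_iff.mp h)), map_zero]
  · rw [hΦ₂ _ _ hde, MvPowerSeries.coeff_C, if_neg]
    intro h
    exact hde ⟨0, by simp [h]⟩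

lemma phi_f1 {fX1 fX1p : Mv p} (h1 : IsEvalAtX1Pow p 1 (fSeries p) fX1)
    (hp : IsEvalAtX1Pow p p (fSeries p) fX1p) : Φ fX1 = fX1p := by
  apply MvPowerSeries.ext; intro d
  by_cases hd1 : d 1 = 0
  · obtain ⟨k, rfl⟩ : ∃ k, d = Finsupp.single 0 k := ⟨d 0, eq_single_of_snd_zero hd1⟩
    by_cases hk : p ∣ k
    · obtain ⟨m, rfl⟩ := hk
      have hL : MvPowerSeries.coeff (Finsupp.single 0 (p*m)) (Φ fX1) =
          phiW p (MvPowerSeries.coeff (Finsupp.single 0 m) fX1) := by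
        rw [single_pmul]; exact hΦ₁ _ _
      have h1m := h1.1 m
      rw [one_mul] at h1m
      rw [hL, h1m, hp.1 m, map_intCast]
    · rw [hΦ₂ _ _ (fun ⟨e, he⟩ => hk (single_eq_smul_iff he).1), hp.2.2 k hk]
  · by_cases hde : ∃ e : Fin 2 →₀ ℕ, d = p • e
    · obtain ⟨e, rfl⟩ := hde
      have he1 : e 1 ≠ 0 := by
        intro h; apply hd1; simp [Finsupp.smul_apply, h]
      rw [hΦ₁, h1.2.1 e he1, map_zero, hp.2.1 _ hd1]
    · rw [hΦ₂ _ _ hde, hp.2.1 _ hd1]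

lemma phi_f2 {fX1 fX1p : Mv p} (h1 : IsEvalAtX1Pow p 1 (fSeries p) fX1)
    (hp : IsEvalAtX1Pow p p (fSeries p) fX1p) :
    Φ fX1p = fX1 - MvPowerSeries.X 0 := by
  apply MvPowerSeries.ext; intro d
  rw [map_sub]
  by_cases hd1 : d 1 = 0
  · obtain ⟨k, rfl⟩ : ∃ k, d = Finsupp.single 0 k := ⟨d 0, eq_single_of_snd_zero hd1⟩
    have h1k := h1.1 k
    rw [one_mul] at h1k
    rw [h1k, MvPowerSeries.coeff_X]
    by_cases hk2 : p^2 ∣ k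
    · obtain ⟨m, rfl⟩ := hk2
      have hk1 : p^2 * m ≠ 1 := by
        intro h
        have : p^2 ≤ 1 := Nat.le_of_dvd one_pos ⟨m, h.symm⟩
        have h2 : 2 ≤ p := (Fact.out : p.Prime).two_le
        nlinarith
      have hL : MvPowerSeries.coeff (Finsupp.single 0 (p^2*m)) (Φ fX1p) =
          ((PowerSeries.coeff m (fSeries p) : ℤ) : W p) := by
        have e1 : (Finsupp.single (0:Fin 2) (p^2*m)) = p • Finsupp.single 0 (p*m) := by
          rw [← single_pmul, ← mul_assoc, ← pow_two]
        rw [e1, hΦ₁, hp.1 m, map_intCast]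
      rw [hL, if_neg (by
        intro h
        rcases (Finsupp.single_eq_single_iff _ _ _ _).mp h with ⟨_, h'⟩ | ⟨h', _⟩
        · exact hk1 h'
        · exact hk1 (by omega))]
      have hc : PowerSeries.coeff m (fSeries p) = PowerSeries.coeff (p^2*m) (fSeries p) := by
        simp only [fSeries, PowerSeries.coeff_mk]
        by_cases h : ∃ n, m = p^(2*n)
        · rw [if_pos h, if_pos (exists_pow_iff.mpr h)]
        · rw [if_neg h, if_neg (fun hh => h (exists_pow_iff.mp hh))]
      rw [hc, sub_zero]
    · have hL : MvPowerSeries.coeff (Finsupp.single 0 k) (Φ fX1p) = 0 := by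
        by_cases hk : p ∣ k
        · obtain ⟨j, rfl⟩ := hk
          have hj : ¬ p ∣ j := by
            rintro ⟨t, rfl⟩; exact hk2 ⟨t, by ring⟩
          rw [single_pmul, hΦ₁, hp.2.2 j hj, map_zero]
        · exact hΦ₂ _ _ (fun ⟨e, he⟩ => hk (single_eq_smul_iff he).1)
      rw [hL]
      by_cases hk1 : k = 1
      · subst hk1
        rw [if_pos rfl]
        have : PowerSeries.coeff 1 (fSeries p) = 1 := by
          simp only [fSeries, PowerSeries.coeff_mk]
          rw [if_pos ⟨0, by simp⟩]
        rw [this]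
        simp
      · have : PowerSeries.coeff k (fSeries p) = 0 := by
          simp only [fSeries, PowerSeries.coeff_mk]
          rw [if_neg]
          rintro ⟨n, rfl⟩
          rcases n with _ | n'
          · exact hk1 (by simp)
          · exact hk2 ⟨p^(2*n'), by rw [← pow_add]; ring_nf⟩
        rw [this, if_neg (by
          intro h
          rcases (Finsupp.single_eq_single_iff _ _ _ _).mp h with ⟨_, h'⟩ | ⟨h', _⟩
          · exact hk1 h'
          · exact hk1 (by omega))]
        simp
  · have hX : MvPowerSeries.coeff d (MvPowerSeries.X (0:Fin 2) : Mv p) = 0 := by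
      rw [MvPowerSeries.coeff_X, if_neg]
      intro h; apply hd1; rw [h]; simp [Finsupp.single_apply]
    rw [h1.2.1 d hd1, hX, sub_zero]
    by_cases hde : ∃ e : Fin 2 →₀ ℕ, d = p • e
    · obtain ⟨e, rfl⟩ := hde
      have he1 : e 1 ≠ 0 := by
        intro h; apply hd1; simp [Finsupp.smul_apply, h]
      rw [hΦ₁, hp.2.1 e he1, map_zero]
    · exact hΦ₂ _ _ hde

end S3b

/-- Let `u ∈ W` be fixed by `φ_W²`, `ū = φ_W(u)`, `U = u − ū`.  With
`Y₀ = [[u, −U·f(X₁)], [0, ū]]` and `Z₀ = [[u, 0], [p⁻¹·U·f(X₁^p), ū]]` over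
`W[[X₁,X₂]][1/p]`, and
`Y[1] = p⁻¹·[[X₁, p], [1, 0]]·φ(Z₀)·[[0, p], [1, −X₁]]`,
`Z[1] = p⁻¹·[[X₂, p], [1, 0]]·φ(Y₀)·[[0, p], [1, −X₂]]`
(where `φ` is the ring endomorphism of `W[[X₁,X₂]]` acting as `φ_W` on coefficients and
sending `Xᵢ` to `Xᵢ^p`, extended to the localization and applied entrywise), one has
`Y[1] = Y₀` and `p·(Z[1] − Z₀) = U·[[X₂·f(X₁^p), −p·X₂ − X₂²·f(X₁^p)], [0, −X₂·f(X₁^p)]]`. -/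
theorem statement_3 (p : ℕ) [Fact p.Prime]
    (u : W p) (hu : phiW p (phiW p u) = u)
    -- `Φ` is the ring endomorphism `φ` of `W[[X₁,X₂]]` (characterized by coefficients):
    (Φ : Mv p →+* Mv p)
    (hΦ₁ : ∀ (F : Mv p) (d : Fin 2 →₀ ℕ),
      MvPowerSeries.coeff (p • d) (Φ F) = phiW p (MvPowerSeries.coeff d F))
    (hΦ₂ : ∀ (F : Mv p) (d : Fin 2 →₀ ℕ),
      (¬ ∃ e : Fin 2 →₀ ℕ, d = p • e) → MvPowerSeries.coeff d (Φ F) = 0)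
    -- `ΦL` is the unique extension of `φ` to `W[[X₁,X₂]][1/p]`:
    (ΦL : L2 p →+* L2 p)
    (hΦL : ∀ F : Mv p, ΦL (iota2 p F) = iota2 p (Φ F))
    -- `pinv` is the inverse `p⁻¹` in `W[[X₁,X₂]][1/p]`:
    (pinv : L2 p) (hpinv : iota2 p ((p : Mv p)) * pinv = 1)
    -- `fX1 = f(X₁)` and `fX1p = f(X₁^p)`:
    (fX1 fX1p : Mv p)
    (hfX1 : IsEvalAtX1Pow p 1 (fSeries p) fX1)
    (hfX1p : IsEvalAtX1Pow p p (fSeries p) fX1p) :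
    pinv • (!![iota2 p (MvPowerSeries.X 0), iota2 p ((p : Mv p)); 1, 0] *
          (!![iota2 p (CMv p u), 0;
              pinv * iota2 p (CMv p (u - phiW p u) * fX1p),
              iota2 p (CMv p (phiW p u))]).map ⇑ΦL *
          !![0, iota2 p ((p : Mv p)); 1, -iota2 p (MvPowerSeries.X 0)]) =
      !![iota2 p (CMv p u), iota2 p (-(CMv p (u - phiW p u) * fX1));
          0, iota2 p (CMv p (phiW p u))] ∧
    iota2 p ((p : Mv p)) •
        (pinv • (!![iota2 p (MvPowerSeries.X 1), iota2 p ((p : Mv p)); 1, 0] *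
            (!![iota2 p (CMv p u), iota2 p (-(CMv p (u - phiW p u) * fX1));
                0, iota2 p (CMv p (phiW p u))]).map ⇑ΦL *
            !![0, iota2 p ((p : Mv p)); 1, -iota2 p (MvPowerSeries.X 1)]) -
          !![iota2 p (CMv p u), 0;
              pinv * iota2 p (CMv p (u - phiW p u) * fX1p),
              iota2 p (CMv p (phiW p u))]) =
      !![iota2 p (CMv p (u - phiW p u) * (MvPowerSeries.X 1 * fX1p)),
          iota2 p (CMv p (u - phiW p u) *
            (-((p : Mv p) * MvPowerSeries.X 1) - (MvPowerSeries.X 1) ^ 2 * fX1p));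
          0, iota2 p (CMv p (u - phiW p u) * (-(MvPowerSeries.X 1 * fX1p)))] := by
  have hΦC := S3b.phiC Φ hΦ₁ hΦ₂
  have hf1 : Φ fX1 = fX1p := S3b.phi_f1 Φ hΦ₁ hΦ₂ hfX1 hfX1p
  have hf2 : Φ fX1p = fX1 - MvPowerSeries.X 0 := S3b.phi_f2 Φ hΦ₁ hΦ₂ hfX1 hfX1p
  set ι := iota2 p with hι
  set q : L2 p := ι ((p : Mv p)) with hq
  set a : L2 p := ι (CMv p u) with ha
  set b : L2 p := ι (CMv p (phiW p u)) with hb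
  set f1 : L2 p := ι fX1 with hf1'
  set f2 : L2 p := ι fX1p with hf2'
  set x1 : L2 p := ι (MvPowerSeries.X 0) with hx1
  set x2 : L2 p := ι (MvPowerSeries.X 1) with hx2
  have hLa : ΦL a = b := by rw [ha, hΦL, hΦC]
  have hLb : ΦL b = a := by rw [hb, hΦL, hΦC, hu]
  have hLf1 : ΦL f1 = f2 := by rw [hf1', hΦL, hf1]
  have hLf2 : ΦL f2 = f1 - x1 := by rw [hf2', hΦL, hf2, map_sub]
  have hLq : ΦL q = q := by rw [hq, hΦL, map_natCast Φ]
  have hLpinv : ΦL pinv = pinv := by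
    have h1 : q * ΦL pinv = 1 := by
      have := congrArg ΦL hpinv
      rw [map_mul, map_one, hLq] at this
      exact this
    calc ΦL pinv = (q * pinv) * ΦL pinv := by rw [hpinv]; ring
    _ = pinv * (q * ΦL pinv) := by ring
    _ = pinv := by rw [h1, mul_one]
  have hCsub : ι (CMv p (u - phiW p u)) = a - b := by rw [map_sub (CMv p), map_sub]
  have hCsub' : Φ (CMv p (u - phiW p u)) = CMv p (phiW p u - u) := by
    rw [hΦC, map_sub (phiW p), hu]
  have hLCsub : ΦL (ι (CMv p (u - phiW p u))) = b - a := by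
    rw [hΦL, hCsub', map_sub (CMv p), map_sub]
  have hE1 : ι (-(CMv p (u - phiW p u) * fX1)) = -((a - b) * f1) := by
    rw [map_neg, map_mul, hCsub]
  have hE2 : ι (CMv p (u - phiW p u) * fX1p) = (a - b) * f2 := by
    rw [map_mul, hCsub]
  have hE3 : ι (CMv p (u - phiW p u) * (MvPowerSeries.X 1 * fX1p)) = (a - b) * (x2 * f2) := by
    rw [map_mul, map_mul, hCsub]
  have hE4 : ι (CMv p (u - phiW p u) *
      (-((p : Mv p) * MvPowerSeries.X 1) - (MvPowerSeries.X 1) ^ 2 * fX1p)) =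
      (a - b) * (-(q * x2) - x2 ^ 2 * f2) := by
    rw [map_mul, hCsub, map_sub, map_neg, map_mul, map_mul, map_pow]
  have hE5 : ι (CMv p (u - phiW p u) * (-(MvPowerSeries.X 1 * fX1p))) =
      (a - b) * (-(x2 * f2)) := by
    rw [map_mul, hCsub, map_neg, map_mul]
  have hMapZ : (!![a, 0; pinv * ι (CMv p (u - phiW p u) * fX1p), b]).map ⇑ΦL =
      !![b, 0; pinv * ((b - a) * (f1 - x1)), a] := by
    ext i j
    fin_cases i <;> fin_cases j <;>
      simp [Matrix.map_apply, hLa, hLb, hLpinv, map_mul, hLCsub, ← hf2', hLf2, ← ha, ← hb]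
  have hMapY : (!![a, ι (-(CMv p (u - phiW p u) * fX1)); 0, b]).map ⇑ΦL =
      !![b, -((b - a) * f2); 0, a] := by
    ext i j
    fin_cases i <;> fin_cases j <;>
      simp [Matrix.map_apply, hLa, hLb, map_neg, map_mul, hLCsub, ← hf1', hLf1, ← ha, ← hb]
  constructor
  · rw [hMapZ, hE1]
    refine Matrix.ext fun i j => ?_
    fin_cases i <;> fin_cases j <;>
      simp only [Matrix.mul_apply, Fin.sum_univ_two, Matrix.smul_apply, smul_eq_mul,
        Matrix.cons_val', Matrix.cons_val_zero, Matrix.cons_val_one, Matrix.head_cons,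
        Matrix.empty_val', Matrix.cons_val_fin_one, Matrix.head_fin_const, Fin.isValue,
        Matrix.sub_apply, Matrix.neg_apply, Fin.mk_zero, Fin.mk_one, Matrix.of_apply, Matrix.cons_val_zero, Matrix.cons_val_one]
    · linear_combination a * hpinv
    · linear_combination ((b - a) * ((f1 - x1) * (q * pinv) + f1)) * hpinv
    · ring
    · linear_combination b * hpinv
  · rw [hMapY, hE2, hE3, hE4, hE5]
    refine Matrix.ext fun i j => ?_
    fin_cases i <;> fin_cases j <;>
      simp only [Matrix.mul_apply, Fin.sum_univ_two, Matrix.smul_apply, smul_eq_mul,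
        Matrix.cons_val', Matrix.cons_val_zero, Matrix.cons_val_one, Matrix.head_cons,
        Matrix.empty_val', Matrix.cons_val_fin_one, Matrix.head_fin_const, Fin.isValue,
        Matrix.sub_apply, Matrix.neg_apply, Fin.mk_zero, Fin.mk_one, Matrix.of_apply, Matrix.cons_val_zero, Matrix.cons_val_one]
    · linear_combination (x2 * (a - b) * f2 + q * a) * hpinv
    · linear_combination (q * x2 * b - x2 ^ 2 * (a - b) * f2 - q * x2 * a) * hpinv
    · ring
    · linear_combination (q * b - x2 * (a - b) * f2) * hpinv

end
end

section
/- Let b ∈ W satisfy φ_W(φ_W(b)) = b and set b' = φ_W(b). In the ring of 2×2 matrices over W[[X₁,X₂]][1/p] set Y₀ = [[b'·f(X₁), p·b − b'·g(X₁)], [b', −b'·f(X₁)]] and Z₀ = [[−b·f(X₁^p), p·b], [b' − p⁻¹·b·g(X₁^p), b·f(X₁^p)]], and define Y[1] = p⁻¹·[[X₁, p], [1, 0]]·φ(Z₀)·[[0, p], [1, −X₁]] and Z[1] = p⁻¹·[[X₂, p], [1, 0]]·φ(Y₀)·[[0, p], [1, −X₂]]. Then Y[1] = Y₀, and every entry of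 p·(Z[1] − Z₀) lies in X₂·W[[X₁,X₂]] (inside the localization). (This is the explicit first step of the two-variable recursion in the ramified case of §3.4: Y₁ = 0 and Z₁ is divisible by X₂.) -/
noncomputable section

open Classical in
/-- uniqueness of representation as sum of two powers of `q ≥ 3` -/
lemma qpow_add_inj {q : ℕ} (hq : 3 ≤ q) : ∀ {i j k l : ℕ}, i ≤ j → k ≤ l →
    q ^ i + q ^ j = q ^ k + q ^ l → i = k ∧ j = l := by
  have key : ∀ i j k l : ℕ, i ≤ j → k ≤ l → i < k → q ^ i + q ^ j ≠ q ^ k + q ^ l := by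
    intro i j k l hij hkl hik h
    have hqpos : 0 < q ^ i := Nat.pow_pos (by omega)
    have hj : q ^ j = q ^ i * q ^ (j - i) := by rw [← pow_add]; congr 1; omega
    have hk : q ^ k = q ^ i * q ^ (k - i) := by rw [← pow_add]; congr 1; omega
    have hl : q ^ l = q ^ i * q ^ (l - i) := by rw [← pow_add]; congr 1; omega
    have h2 : 1 + q ^ (j - i) = q ^ (k - i) + q ^ (l - i) := by
      have := h
      rw [hj, hk, hl, ← Nat.mul_one (q ^ i), mul_assoc, ← Nat.mul_add, ← Nat.mul_add] at this
      simpa using Nat.eq_of_mul_eq_mul_left hqpos (by simpa [Nat.one_mul] using this)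
    have hdvd : q ∣ q ^ (k - i) + q ^ (l - i) :=
      Nat.dvd_add (dvd_pow_self q (by omega)) (dvd_pow_self q (by omega))
    rw [← h2] at hdvd
    rcases Nat.eq_or_lt_of_le hij with rfl | hlt
    · simp at hdvd
      have := Nat.le_of_dvd (by norm_num) hdvd
      omega
    · have h4 : q ∣ q ^ (j - i) := dvd_pow_self q (by omega)
      have h5 : q ∣ 1 := (Nat.dvd_add_right h4).mp (by rwa [Nat.add_comm] at hdvd)
      have := Nat.dvd_one.mp h5
      omega
  intro i j k l hij hkl h
  have hik : i = k := by
    rcases lt_trichotomy i k with hlt | heq | hgt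
    · exact absurd h (key i j k l hij hkl hlt)
    · exact heq
    · exact absurd h.symm (key k l i j hkl hij hgt)
  subst hik
  exact ⟨rfl, Nat.pow_right_injective (by omega) (Nat.add_left_cancel h)⟩

lemma pow2_add_inj {p : ℕ} (hp : 2 ≤ p) {i j k l : ℕ} (hij : i ≤ j) (hkl : k ≤ l)
    (h : p ^ (2 * i) + p ^ (2 * j) = p ^ (2 * k) + p ^ (2 * l)) : i = k ∧ j = l := by
  have hq : 3 ≤ p ^ 2 := by nlinarith
  have h' : (p ^ 2) ^ i + (p ^ 2) ^ j = (p ^ 2) ^ k + (p ^ 2) ^ l := by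
    simpa [← pow_mul] using h
  exact qpow_add_inj hq hij hkl h'
open Classical

lemma fSeries_coeff (p k : ℕ) :
    PowerSeries.coeff k (fSeries p) = if ∃ n : ℕ, k = p ^ (2 * n) then 1 else 0 :=
  PowerSeries.coeff_mk _ _

lemma gSeries_coeff (p k : ℕ) :
    PowerSeries.coeff k (gSeries p) =
      (if ∃ m : ℕ, k = 2 * p ^ (2 * m) then 1 else 0) +
        (if ∃ m i : ℕ, i < m ∧ k = p ^ (2 * m) + p ^ (2 * i) then 2 else 0) :=
  PowerSeries.coeff_mk _ _

lemma f_mul_f (p : ℕ) (hp : 2 ≤ p) : fSeries p * fSeries p = gSeries p := by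
  ext n
  rw [PowerSeries.coeff_mul, gSeries_coeff]
  have hterm : ∀ x : ℕ × ℕ,
      PowerSeries.coeff x.1 (fSeries p) * PowerSeries.coeff x.2 (fSeries p) =
        if (∃ u : ℕ, x.1 = p ^ (2 * u)) ∧ (∃ v : ℕ, x.2 = p ^ (2 * v)) then 1 else 0 := by
    intro x
    rw [fSeries_coeff, fSeries_coeff]
    by_cases h1 : ∃ u : ℕ, x.1 = p ^ (2 * u) <;> by_cases h2 : ∃ v : ℕ, x.2 = p ^ (2 * v) <;>
      simp [h1, h2]
  rw [Finset.sum_congr rfl fun x _ => hterm x, Finset.sum_boole]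
  set S := (Finset.HasAntidiagonal.antidiagonal n).filter
    (fun x : ℕ × ℕ => (∃ u : ℕ, x.1 = p ^ (2 * u)) ∧ (∃ v : ℕ, x.2 = p ^ (2 * v))) with hS
  have memS : ∀ x : ℕ × ℕ, x ∈ S ↔
      x.1 + x.2 = n ∧ (∃ u : ℕ, x.1 = p ^ (2 * u)) ∧ (∃ v : ℕ, x.2 = p ^ (2 * v)) := by
    intro x
    simp [hS, Finset.mem_filter, Finset.HasAntidiagonal.mem_antidiagonal, and_assoc]
  by_cases hA : ∃ m : ℕ, n = 2 * p ^ (2 * m)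
  · obtain ⟨m, rfl⟩ := hA
    have hB : ¬ ∃ m' i : ℕ, i < m' ∧ 2 * p ^ (2 * m) = p ^ (2 * m') + p ^ (2 * i) := by
      rintro ⟨m', i, him, he⟩
      have := pow2_add_inj hp (le_refl m) (le_of_lt him) (by omega)
      omega
    have hScard : S = {(p ^ (2 * m), p ^ (2 * m))} := by
      ext x
      rw [memS, Finset.mem_singleton]
      constructor
      · rintro ⟨hsum, ⟨u, hu⟩, ⟨v, hv⟩⟩
        rcases le_total u v with huv | huv
        · obtain ⟨rfl, rfl⟩ := pow2_add_inj hp huv (le_refl m) (by omega)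
          rw [Prod.ext_iff]; exact ⟨hu, hv⟩
        · obtain ⟨rfl, rfl⟩ := pow2_add_inj hp huv (le_refl m) (by omega)
          rw [Prod.ext_iff]; exact ⟨hu, hv⟩
      · rintro rfl
        refine ⟨?_, ⟨m, rfl⟩, ⟨m, rfl⟩⟩
        show p ^ (2 * m) + p ^ (2 * m) = 2 * p ^ (2 * m)
        omega
    have hA' : ∃ m1 : ℕ, p ^ (2 * m) = p ^ (2 * m1) := ⟨m, rfl⟩
    rw [hScard]
    simp [hA', hB]
  · by_cases hC : ∃ m i : ℕ, i < m ∧ n = p ^ (2 * m) + p ^ (2 * i)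
    · obtain ⟨m, i, him, rfl⟩ := hC
      have hne : p ^ (2 * m) ≠ p ^ (2 * i) := by
        intro h
        have := Nat.pow_right_injective hp h
        omega
      have hScard : S = {(p ^ (2 * m), p ^ (2 * i)), (p ^ (2 * i), p ^ (2 * m))} := by
        ext x
        rw [memS, Finset.mem_insert, Finset.mem_singleton]
        constructor
        · rintro ⟨hsum, ⟨u, hu⟩, ⟨v, hv⟩⟩
          rcases le_total u v with huv | huv
          · obtain ⟨rfl, rfl⟩ := pow2_add_inj hp huv (le_of_lt him) (by omega)
            right; rw [Prod.ext_iff]; exact ⟨hu, hv⟩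
          · obtain ⟨rfl, rfl⟩ := pow2_add_inj hp huv (le_of_lt him) (by omega)
            left; rw [Prod.ext_iff]; exact ⟨hu, hv⟩
        · rintro (rfl | rfl)
          · exact ⟨rfl, ⟨m, rfl⟩, ⟨i, rfl⟩⟩
          · refine ⟨?_, ⟨i, rfl⟩, ⟨m, rfl⟩⟩
            show p ^ (2 * i) + p ^ (2 * m) = p ^ (2 * m) + p ^ (2 * i)
            omega
      rw [hScard]
      rw [Finset.card_insert_of_notMem (by simp [Prod.ext_iff, hne]), Finset.card_singleton]
      have hC' : ∃ m' i' : ℕ, i' < m' ∧ p ^ (2 * m) + p ^ (2 * i) = p ^ (2 * m') + p ^ (2 * i') :=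
        ⟨m, i, him, rfl⟩
      simp [hA, hC']
    · have hScard : S = ∅ := by
        ext x
        rw [memS]
        simp only [Finset.notMem_empty, iff_false]
        rintro ⟨hsum, ⟨u, hu⟩, ⟨v, hv⟩⟩
        rcases lt_trichotomy u v with huv | rfl | huv
        · exact hC ⟨v, u, huv, by omega⟩
        · exact hA ⟨u, by omega⟩
        · exact hC ⟨u, v, huv, by omega⟩
      rw [hScard]
      simp [hA, hC]
section MvAux

variable (p : ℕ) [Fact p.Prime]

omit [Fact p.Prime] in
lemma fin2_single (d : Fin 2 →₀ ℕ) (h : d 1 = 0) : d = Finsupp.single 0 (d 0) := by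
  ext i
  fin_cases i
  · simp
  · simpa using h

omit [Fact p.Prime] in
lemma smul_single_fin2 (m : ℕ) :
    (p • Finsupp.single (0 : Fin 2) m : Fin 2 →₀ ℕ) = Finsupp.single 0 (p * m) := by
  rw [Finsupp.smul_single]; rfl

omit [Fact p.Prime] in
lemma not_smul_decomp (k : ℕ) (hk : ¬ p ∣ k) :
    ¬ ∃ e : Fin 2 →₀ ℕ, (Finsupp.single (0 : Fin 2) k : Fin 2 →₀ ℕ) = p • e := by
  rintro ⟨e, he⟩
  apply hk
  have := DFunLike.congr_fun he (0 : Fin 2)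
  simp only [Finsupp.single_eq_same, Finsupp.smul_apply, smul_eq_mul] at this
  exact ⟨e 0, this⟩

omit [Fact p.Prime] in
lemma helper1 (hp2 : 2 ≤ p) (m' : ℕ) :
    (∃ n : ℕ, p * (p * m') = p ^ (2 * n)) ↔ (∃ n : ℕ, m' = p ^ (2 * n)) := by
  constructor
  · rintro ⟨n, hn⟩
    rcases n with _ | n'
    · exfalso
      simp only [Nat.mul_zero, pow_zero] at hn
      have : p ∣ 1 := ⟨p * m', hn.symm⟩
      have := Nat.dvd_one.mp this
      omega
    · refine ⟨n', ?_⟩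
      have heq : p * (p * m') = p * (p * p ^ (2 * n')) := by
        rw [hn, show 2 * (n' + 1) = (2 * n') + 1 + 1 by ring, pow_succ, pow_succ]
        ring
      have h5 := Nat.eq_of_mul_eq_mul_left (by omega) heq
      exact Nat.eq_of_mul_eq_mul_left (by omega) h5
  · rintro ⟨n, rfl⟩
    refine ⟨n + 1, ?_⟩
    rw [show 2 * (n + 1) = (2 * n) + 1 + 1 by ring, pow_succ, pow_succ]
    ring

omit [Fact p.Prime] in
lemma helper2 (hp2 : 2 ≤ p) (m : ℕ) (hpm : ¬ p ∣ m) :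
    ¬ ∃ n : ℕ, p * m = p ^ (2 * n) := by
  rintro ⟨n, hn⟩
  rcases n with _ | n'
  · simp only [Nat.mul_zero, pow_zero] at hn
    have : p ∣ 1 := ⟨m, hn.symm⟩
    have := Nat.dvd_one.mp this
    omega
  · apply hpm
    refine ⟨p ^ (2 * n'), ?_⟩
    have hq : p * m = p * (p * p ^ (2 * n')) := by
      rw [hn, show 2 * (n' + 1) = (2 * n') + 1 + 1 by ring, pow_succ, pow_succ]
      ring
    exact Nat.eq_of_mul_eq_mul_left (by omega) hq

omit [Fact p.Prime] in
lemma helper3 (hp2 : 2 ≤ p) (k : ℕ) (hpk : ¬ p ∣ k) :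
    (∃ n : ℕ, k = p ^ (2 * n)) ↔ k = 1 := by
  constructor
  · rintro ⟨n, rfl⟩
    rcases n with _ | n'
    · simp
    · exfalso
      apply hpk
      refine ⟨p ^ (2 * n' + 1), ?_⟩
      rw [show 2 * (n' + 1) = (2 * n' + 1) + 1 by ring, pow_succ]
      ring
  · rintro rfl
    exact ⟨0, by simp⟩

variable (Φ : Mv p →+* Mv p)
variable (hΦ₁ : ∀ (F : Mv p) (d : Fin 2 →₀ ℕ),
      MvPowerSeries.coeff (p • d) (Φ F) = phiW p (MvPowerSeries.coeff d F))
variable (hΦ₂ : ∀ (F : Mv p) (d : Fin 2 →₀ ℕ),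
      (¬ ∃ e : Fin 2 →₀ ℕ, d = p • e) → MvPowerSeries.coeff d (Φ F) = 0)

include hΦ₁ hΦ₂

lemma phi_C (c : W p) : Φ (CMv p c) = CMv p (phiW p c) := by
  classical
  refine MvPowerSeries.ext fun d => ?_
  by_cases hd : d = 0
  · subst hd
    have h0 : (0 : Fin 2 →₀ ℕ) = p • (0 : Fin 2 →₀ ℕ) := by simp
    rw [h0, hΦ₁]
    simp [MvPowerSeries.coeff_C]
  · rw [MvPowerSeries.coeff_C, if_neg hd]
    by_cases he : ∃ e : Fin 2 →₀ ℕ, d = p • e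
    · obtain ⟨e, rfl⟩ := he
      have hene : e ≠ 0 := by rintro rfl; simp at hd
      rw [hΦ₁, MvPowerSeries.coeff_C, if_neg hene, map_zero]
    · exact hΦ₂ _ _ he

lemma phi_transport {F : PowerSeries ℤ} {G G' : Mv p}
    (hG : IsEvalAtX1Pow p 1 F G) (hG' : IsEvalAtX1Pow p p F G') : Φ G = G' := by
  classical
  refine MvPowerSeries.ext fun d => ?_
  by_cases hd1 : d 1 = 0
  · obtain ⟨k, rfl⟩ : ∃ k, d = Finsupp.single 0 k := ⟨d 0, fin2_single d hd1⟩
    by_cases hpk : p ∣ k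
    · obtain ⟨m, rfl⟩ := hpk
      rw [← smul_single_fin2, hΦ₁]
      have h1 := hG.1 m
      rw [one_mul] at h1
      rw [h1, map_intCast, smul_single_fin2]
      exact (hG'.1 m).symm
    · rw [hΦ₂ _ _ (not_smul_decomp p k hpk)]
      exact (hG'.2.2 k hpk).symm
  · rw [hG'.2.1 d hd1]
    by_cases he : ∃ e : Fin 2 →₀ ℕ, d = p • e
    · obtain ⟨e, rfl⟩ := he
      have he1 : e 1 ≠ 0 := by
        intro h0
        apply hd1
        simp [Finsupp.smul_apply, h0]
      rw [hΦ₁, hG.2.1 e he1, map_zero]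
    · exact hΦ₂ _ _ he

/-- `Φ(f(X₁^p)) = f(X₁) - X₁`. -/
lemma phi_fX1p {fX1 fX1p : Mv p}
    (hfX1 : IsEvalAtX1Pow p 1 (fSeries p) fX1)
    (hfX1p : IsEvalAtX1Pow p p (fSeries p) fX1p) :
    Φ fX1p = fX1 - MvPowerSeries.X 0 := by
  classical
  have hp2 : 2 ≤ p := (Fact.out : p.Prime).two_le
  refine MvPowerSeries.ext fun d => ?_
  rw [map_sub]
  by_cases hd1 : d 1 = 0
  · obtain ⟨k, rfl⟩ : ∃ k, d = Finsupp.single 0 k := ⟨d 0, fin2_single d hd1⟩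
    have hX : MvPowerSeries.coeff (Finsupp.single (0 : Fin 2) k) (MvPowerSeries.X 0 : Mv p)
        = if k = 1 then 1 else 0 := by
      rw [MvPowerSeries.coeff_X]
      by_cases h1 : k = 1
      · subst h1; simp
      · rw [if_neg, if_neg h1]
        intro hcon
        exact h1 (by simpa using DFunLike.congr_fun hcon (0 : Fin 2))
    have hf1 : ∀ k' : ℕ, MvPowerSeries.coeff (Finsupp.single (0 : Fin 2) k') fX1
        = (((if ∃ n : ℕ, k' = p ^ (2 * n) then 1 else 0 : ℤ)) : W p) := by
      intro k'
      have h1 := hfX1.1 k'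
      rw [one_mul] at h1
      rw [h1, fSeries_coeff]
    rw [hX, hf1]
    by_cases hpk : p ∣ k
    · obtain ⟨m, rfl⟩ := hpk
      have hk1 : p * m ≠ 1 := by
        intro h
        have : p ∣ 1 := ⟨m, h.symm⟩
        have := Nat.dvd_one.mp this
        omega
      rw [if_neg hk1, sub_zero, ← smul_single_fin2, hΦ₁]
      by_cases hpm : p ∣ m
      · obtain ⟨m', rfl⟩ := hpm
        rw [hfX1p.1 m', fSeries_coeff, map_intCast]
        by_cases hm' : ∃ n : ℕ, m' = p ^ (2 * n)
        · rw [if_pos hm', if_pos ((helper1 p hp2 m').mpr hm')]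
        · rw [if_neg hm', if_neg (fun hcon => hm' ((helper1 p hp2 m').mp hcon))]
      · rw [hfX1p.2.2 m hpm, map_zero, if_neg (helper2 p hp2 m hpm)]
        simp
    · rw [hΦ₂ _ _ (not_smul_decomp p k hpk)]
      by_cases h1 : k = 1
      · subst h1
        rw [if_pos rfl, if_pos ⟨0, by simp⟩]
        simp
      · rw [if_neg h1, if_neg (fun hcon => h1 ((helper3 p hp2 k hpk).mp hcon))]
        simp
  · have h2 : MvPowerSeries.coeff d fX1 = 0 := hfX1.2.1 d hd1
    have h3 : MvPowerSeries.coeff d (MvPowerSeries.X (0 : Fin 2) : Mv p) = 0 := by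
      rw [MvPowerSeries.coeff_X, if_neg]
      intro hcon
      apply hd1
      rw [hcon]
      simp
    rw [h2, h3, sub_zero]
    by_cases he : ∃ e : Fin 2 →₀ ℕ, d = p • e
    · obtain ⟨e, rfl⟩ := he
      have he1 : e 1 ≠ 0 := by
        intro h0
        apply hd1
        simp [Finsupp.smul_apply, h0]
      rw [hΦ₁, hfX1p.2.1 e he1, map_zero]
    · exact hΦ₂ _ _ he

end MvAux
section MvAux2

variable (p : ℕ) [Fact p.Prime]

lemma eval_one_unique {F : PowerSeries ℤ} {G G' : Mv p}
    (hG : IsEvalAtX1Pow p 1 F G) (hG' : IsEvalAtX1Pow p 1 F G') : G = G' := by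
  refine MvPowerSeries.ext fun d => ?_
  by_cases hd1 : d 1 = 0
  · obtain ⟨k, rfl⟩ : ∃ k, d = Finsupp.single 0 k := ⟨d 0, fin2_single d hd1⟩
    have h1 := hG.1 k
    have h2 := hG'.1 k
    rw [one_mul] at h1 h2
    rw [h1, h2]
  · rw [hG.2.1 d hd1, hG'.2.1 d hd1]

lemma eval_one_mul {F₁ F₂ : PowerSeries ℤ} {G₁ G₂ : Mv p}
    (h₁ : IsEvalAtX1Pow p 1 F₁ G₁) (h₂ : IsEvalAtX1Pow p 1 F₂ G₂) :
    IsEvalAtX1Pow p 1 (F₁ * F₂) (G₁ * G₂) := by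
  classical
  refine ⟨?_, ?_, ?_⟩
  · intro k
    rw [one_mul, MvPowerSeries.coeff_mul, Finsupp.antidiagonal_single, Finset.sum_map,
      PowerSeries.coeff_mul, Int.cast_sum]
    refine Finset.sum_congr rfl fun x _ => ?_
    simp only [Function.Embedding.coe_prodMap, Function.Embedding.coeFn_mk, Prod.map_fst,
      Prod.map_snd]
    have e1 := h₁.1 x.1
    have e2 := h₂.1 x.2
    rw [one_mul] at e1 e2
    rw [e1, e2, Int.cast_mul]
  · intro d hd
    rw [MvPowerSeries.coeff_mul]
    refine Finset.sum_eq_zero fun x hx => ?_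
    have hsum : x.1 + x.2 = d := Finset.HasAntidiagonal.mem_antidiagonal.mp hx
    by_cases hx1 : x.1 1 = 0
    · have hx2 : x.2 1 ≠ 0 := by
        intro h0
        apply hd
        rw [← hsum]
        simp [hx1, h0]
      rw [h₂.2.1 x.2 hx2, mul_zero]
    · rw [h₁.2.1 x.1 hx1, zero_mul]
  · intro k hk
    exact absurd (one_dvd k) hk

lemma g_eq_f_sq {fX1 gX1 : Mv p}
    (hfX1 : IsEvalAtX1Pow p 1 (fSeries p) fX1)
    (hgX1 : IsEvalAtX1Pow p 1 (gSeries p) gX1) :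
    gX1 = fX1 * fX1 := by
  have hp2 : 2 ≤ p := (Fact.out : p.Prime).two_le
  refine eval_one_unique p hgX1 ?_
  have := eval_one_mul p hfX1 hfX1
  rwa [f_mul_f p hp2] at this

end MvAux2

set_option maxHeartbeats 1000000 in
/-- Let `b ∈ W` be fixed by `φ_W²` and `b' = φ_W(b)`.  With
`Y₀ = [[b'·f(X₁), p·b − b'·g(X₁)], [b', −b'·f(X₁)]]` and
`Z₀ = [[−b·f(X₁^p), p·b], [b' − p⁻¹·b·g(X₁^p), b·f(X₁^p)]]` over `W[[X₁,X₂]][1/p]`, and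
`Y[1] = p⁻¹·[[X₁, p], [1, 0]]·φ(Z₀)·[[0, p], [1, −X₁]]`,
`Z[1] = p⁻¹·[[X₂, p], [1, 0]]·φ(Y₀)·[[0, p], [1, −X₂]]`
(where `φ` is the ring endomorphism of `W[[X₁,X₂]]` acting as `φ_W` on coefficients and
sending `Xᵢ` to `Xᵢ^p`, extended to the localization and applied entrywise), one has
`Y[1] = Y₀`, and every entry of `p·(Z[1] − Z₀)` lies in `X₂·W[[X₁,X₂]]` (inside the
localization). -/
theorem statement_4 (p : ℕ) [Fact p.Prime]
    (b : W p) (hb : phiW p (phiW p b) = b)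
    -- `Φ` is the ring endomorphism `φ` of `W[[X₁,X₂]]` (characterized by coefficients):
    (Φ : Mv p →+* Mv p)
    (hΦ₁ : ∀ (F : Mv p) (d : Fin 2 →₀ ℕ),
      MvPowerSeries.coeff (p • d) (Φ F) = phiW p (MvPowerSeries.coeff d F))
    (hΦ₂ : ∀ (F : Mv p) (d : Fin 2 →₀ ℕ),
      (¬ ∃ e : Fin 2 →₀ ℕ, d = p • e) → MvPowerSeries.coeff d (Φ F) = 0)
    -- `ΦL` is the unique extension of `φ` to `W[[X₁,X₂]][1/p]`:
    (ΦL : L2 p →+* L2 p)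
    (hΦL : ∀ F : Mv p, ΦL (iota2 p F) = iota2 p (Φ F))
    -- `pinv` is the inverse `p⁻¹` in `W[[X₁,X₂]][1/p]`:
    (pinv : L2 p) (hpinv : iota2 p ((p : Mv p)) * pinv = 1)
    -- `fX1 = f(X₁)`, `fX1p = f(X₁^p)`, `gX1 = g(X₁)`, `gX1p = g(X₁^p)`:
    (fX1 fX1p gX1 gX1p : Mv p)
    (hfX1 : IsEvalAtX1Pow p 1 (fSeries p) fX1)
    (hfX1p : IsEvalAtX1Pow p p (fSeries p) fX1p)
    (hgX1 : IsEvalAtX1Pow p 1 (gSeries p) gX1)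
    (hgX1p : IsEvalAtX1Pow p p (gSeries p) gX1p) :
    pinv • (!![iota2 p (MvPowerSeries.X 0), iota2 p ((p : Mv p)); 1, 0] *
          (!![iota2 p (-(CMv p b * fX1p)), iota2 p ((p : Mv p) * CMv p b);
              iota2 p (CMv p (phiW p b)) - pinv * iota2 p (CMv p b * gX1p),
              iota2 p (CMv p b * fX1p)]).map ⇑ΦL *
          !![0, iota2 p ((p : Mv p)); 1, -iota2 p (MvPowerSeries.X 0)]) =
      !![iota2 p (CMv p (phiW p b) * fX1),
          iota2 p ((p : Mv p) * CMv p b - CMv p (phiW p b) * gX1);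
          iota2 p (CMv p (phiW p b)), iota2 p (-(CMv p (phiW p b) * fX1))] ∧
    ∀ i j : Fin 2, ∃ h : Mv p,
      (iota2 p ((p : Mv p)) •
          (pinv • (!![iota2 p (MvPowerSeries.X 1), iota2 p ((p : Mv p)); 1, 0] *
              (!![iota2 p (CMv p (phiW p b) * fX1),
                  iota2 p ((p : Mv p) * CMv p b - CMv p (phiW p b) * gX1);
                  iota2 p (CMv p (phiW p b)),
                  iota2 p (-(CMv p (phiW p b) * fX1))]).map ⇑ΦL *
              !![0, iota2 p ((p : Mv p)); 1, -iota2 p (MvPowerSeries.X 1)]) -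
            !![iota2 p (-(CMv p b * fX1p)), iota2 p ((p : Mv p) * CMv p b);
                iota2 p (CMv p (phiW p b)) - pinv * iota2 p (CMv p b * gX1p),
                iota2 p (CMv p b * fX1p)])) i j =
        iota2 p (MvPowerSeries.X 1 * h) := by
  classical
  have hp2 : 2 ≤ p := (Fact.out : p.Prime).two_le
  -- Frobenius facts
  have hΦC : ∀ c : W p, Φ (CMv p c) = CMv p (phiW p c) := phi_C p Φ hΦ₁ hΦ₂
  have hΦf1 : Φ fX1 = fX1p := phi_transport p Φ hΦ₁ hΦ₂ hfX1 hfX1p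
  have hΦg1 : Φ gX1 = gX1p := phi_transport p Φ hΦ₁ hΦ₂ hgX1 hgX1p
  have hΦfp : Φ fX1p = fX1 - MvPowerSeries.X 0 := phi_fX1p p Φ hΦ₁ hΦ₂ hfX1 hfX1p
  have hg : gX1 = fX1 * fX1 := g_eq_f_sq p hfX1 hgX1
  have hg' : gX1p = fX1p * fX1p := by rw [← hΦg1, hg, map_mul, hΦf1]
  have hΦgp : Φ gX1p = (fX1 - MvPowerSeries.X 0) * (fX1 - MvPowerSeries.X 0) := by
    rw [hg', map_mul, hΦfp]
  have hΦLp : ΦL (iota2 p ((p : Mv p))) = iota2 p ((p : Mv p)) := by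
    rw [hΦL, map_natCast]
  have hΦLpinv : ΦL pinv = pinv := by
    have h1 : iota2 p ((p : Mv p)) * ΦL pinv = 1 := by
      rw [← hΦLp, ← map_mul, hpinv, map_one]
    linear_combination pinv * h1 - ΦL pinv * hpinv
  have hfac : ∀ a : Mv p, iota2 p a = pinv * iota2 p ((p : Mv p) * a) := by
    intro a
    rw [map_mul]
    linear_combination (-(iota2 p a)) * hpinv
  -- images under Φ of the relevant entries
  have k1 : Φ (CMv p (phiW p b) * fX1) = CMv p b * fX1p := by
    rw [map_mul, hΦC, hb, hΦf1]
  have k2 : Φ ((p : Mv p) * CMv p b - CMv p (phiW p b) * gX1) =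
      (p : Mv p) * CMv p (phiW p b) - CMv p b * (fX1p * fX1p) := by
    rw [map_sub, map_mul, map_mul, map_natCast, hΦC, hΦC, hb, hΦg1, hg']
  have k3 : Φ (CMv p (phiW p b)) = CMv p b := by rw [hΦC, hb]
  have k4 : Φ (-(CMv p (phiW p b) * fX1)) = -(CMv p b * fX1p) := by rw [map_neg, k1]
  have k5 : Φ (-(CMv p b * fX1p)) =
      -(CMv p (phiW p b) * (fX1 - MvPowerSeries.X 0)) := by
    rw [map_neg, map_mul, hΦC, hΦfp]
  have k6 : Φ ((p : Mv p) * CMv p b) = (p : Mv p) * CMv p (phiW p b) := by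
    rw [map_mul, map_natCast, hΦC]
  have k7 : Φ (CMv p b * gX1p) = CMv p (phiW p b) *
      ((fX1 - MvPowerSeries.X 0) * (fX1 - MvPowerSeries.X 0)) := by
    rw [map_mul, hΦC, hΦgp]
  have k8 : Φ (CMv p b * fX1p) = CMv p (phiW p b) * (fX1 - MvPowerSeries.X 0) := by
    rw [map_mul, hΦC, hΦfp]
  -- the integral matrices
  have hZmap : (!![iota2 p (-(CMv p b * fX1p)), iota2 p ((p : Mv p) * CMv p b);
              iota2 p (CMv p (phiW p b)) - pinv * iota2 p (CMv p b * gX1p),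
              iota2 p (CMv p b * fX1p)]).map ⇑ΦL =
      pinv • !![iota2 p ((p : Mv p) * -(CMv p (phiW p b) * (fX1 - MvPowerSeries.X 0))),
          iota2 p ((p : Mv p) * ((p : Mv p) * CMv p (phiW p b)));
          iota2 p ((p : Mv p) * CMv p b - CMv p (phiW p b) *
            ((fX1 - MvPowerSeries.X 0) * (fX1 - MvPowerSeries.X 0))),
          iota2 p ((p : Mv p) * (CMv p (phiW p b) * (fX1 - MvPowerSeries.X 0)))] := by
    ext i j
    fin_cases i <;> fin_cases j <;>
      simp only [Fin.zero_eta, Fin.mk_one, Fin.isValue, Matrix.of_apply, Matrix.map_apply, Matrix.smul_apply, Matrix.cons_val', Matrix.cons_val_zero,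
        Matrix.cons_val_one, Matrix.head_cons, Matrix.head_fin_const, Matrix.empty_val',
        Matrix.cons_val_fin_one, smul_eq_mul]
    · rw [hΦL, k5]; exact hfac _
    · rw [hΦL, k6]; exact hfac _
    · rw [map_sub, map_mul, hΦLpinv, hΦL, hΦL, k3, k7]
      simp only [map_sub, map_mul]
      linear_combination (-(iota2 p (CMv p b))) * hpinv
    · rw [hΦL, k8]; exact hfac _
  constructor
  · -- part 1 : Y⁽¹⁾ = Y₀
    rw [hZmap, Matrix.mul_smul, Matrix.smul_mul, smul_smul]
    have hMain1 : !![iota2 p (MvPowerSeries.X 0), iota2 p ((p : Mv p)); 1, 0] *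
        !![iota2 p ((p : Mv p) * -(CMv p (phiW p b) * (fX1 - MvPowerSeries.X 0))),
            iota2 p ((p : Mv p) * ((p : Mv p) * CMv p (phiW p b)));
            iota2 p ((p : Mv p) * CMv p b - CMv p (phiW p b) *
              ((fX1 - MvPowerSeries.X 0) * (fX1 - MvPowerSeries.X 0))),
            iota2 p ((p : Mv p) * (CMv p (phiW p b) * (fX1 - MvPowerSeries.X 0)))] *
        !![0, iota2 p ((p : Mv p)); 1, -iota2 p (MvPowerSeries.X 0)] =
        (iota2 p ((p : Mv p)) * iota2 p ((p : Mv p))) •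
          !![iota2 p (CMv p (phiW p b) * fX1),
              iota2 p ((p : Mv p) * CMv p b - CMv p (phiW p b) * gX1);
              iota2 p (CMv p (phiW p b)), iota2 p (-(CMv p (phiW p b) * fX1))] := by
      rw [hg]
      ext i j
      fin_cases i <;> fin_cases j <;>
        simp only [Fin.zero_eta, Fin.mk_one, Fin.isValue, Matrix.of_apply, Matrix.mul_apply, Fin.sum_univ_two, Matrix.smul_apply, Matrix.cons_val',
          Matrix.cons_val_zero, Matrix.cons_val_one, Matrix.head_cons, Matrix.head_fin_const,
          Matrix.empty_val', Matrix.cons_val_fin_one, smul_eq_mul, map_mul, map_sub, map_add,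
          map_neg, map_one, map_zero] <;> ring
    rw [hMain1, smul_smul]
    have hone : pinv * pinv * (iota2 p ((p : Mv p)) * iota2 p ((p : Mv p))) = 1 := by
      linear_combination (pinv * iota2 p ((p : Mv p)) + 1) * hpinv
    rw [hone, one_smul]
  · -- part 2 : p·(Z⁽¹⁾ − Z₀) has entries in X₂·W[[X₁,X₂]]
    intro i j
    refine ⟨!![(p : Mv p) * CMv p (phiW p b) - CMv p b * (fX1p * fX1p),
        2 * ((p : Mv p) * (CMv p b * fX1p)) + MvPowerSeries.X 1 * (CMv p b * (fX1p * fX1p)) -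
          MvPowerSeries.X 1 * ((p : Mv p) * CMv p (phiW p b));
        0, CMv p b * (fX1p * fX1p) - (p : Mv p) * CMv p (phiW p b)] i j, ?_⟩
    have hYmap : (!![iota2 p (CMv p (phiW p b) * fX1),
        iota2 p ((p : Mv p) * CMv p b - CMv p (phiW p b) * gX1);
        iota2 p (CMv p (phiW p b)), iota2 p (-(CMv p (phiW p b) * fX1))]).map ⇑ΦL =
        !![iota2 p (CMv p b * fX1p),
            iota2 p ((p : Mv p) * CMv p (phiW p b) - CMv p b * (fX1p * fX1p));
            iota2 p (CMv p b), iota2 p (-(CMv p b * fX1p))] := by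
      ext i' j'
      fin_cases i' <;> fin_cases j' <;>
        simp only [Fin.zero_eta, Fin.mk_one, Fin.isValue, Matrix.of_apply, Matrix.map_apply, Matrix.cons_val', Matrix.cons_val_zero, Matrix.cons_val_one,
          Matrix.head_cons, Matrix.head_fin_const, Matrix.empty_val', Matrix.cons_val_fin_one]
      · rw [hΦL, k1]
      · rw [hΦL, k2]
      · rw [hΦL, k3]
      · rw [hΦL, k4]
    have hZfac : !![iota2 p (-(CMv p b * fX1p)), iota2 p ((p : Mv p) * CMv p b);
          iota2 p (CMv p (phiW p b)) - pinv * iota2 p (CMv p b * gX1p),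
          iota2 p (CMv p b * fX1p)] =
        pinv • !![iota2 p ((p : Mv p) * -(CMv p b * fX1p)),
            iota2 p ((p : Mv p) * ((p : Mv p) * CMv p b));
            iota2 p ((p : Mv p) * CMv p (phiW p b) - CMv p b * (fX1p * fX1p)),
            iota2 p ((p : Mv p) * (CMv p b * fX1p))] := by
      ext i' j'
      fin_cases i' <;> fin_cases j' <;>
        simp only [Fin.zero_eta, Fin.mk_one, Fin.isValue, Matrix.of_apply, Matrix.smul_apply, Matrix.cons_val', Matrix.cons_val_zero,
          Matrix.cons_val_one, Matrix.head_cons, Matrix.head_fin_const, Matrix.empty_val',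
          Matrix.cons_val_fin_one, smul_eq_mul]
      · exact hfac _
      · exact hfac _
      · rw [hg']
        simp only [map_sub, map_mul]
        linear_combination (-(iota2 p (CMv p (phiW p b)))) * hpinv
      · exact hfac _
    rw [hYmap, hZfac]
    rw [← smul_sub]
    rw [smul_smul, hpinv, one_smul]
    have hD : ∀ i' j' : Fin 2,
        (!![iota2 p (MvPowerSeries.X 1), iota2 p ((p : Mv p)); 1, 0] *
          !![iota2 p (CMv p b * fX1p),
              iota2 p ((p : Mv p) * CMv p (phiW p b) - CMv p b * (fX1p * fX1p));
              iota2 p (CMv p b), iota2 p (-(CMv p b * fX1p))] *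
          !![0, iota2 p ((p : Mv p)); 1, -iota2 p (MvPowerSeries.X 1)] -
          !![iota2 p ((p : Mv p) * -(CMv p b * fX1p)),
              iota2 p ((p : Mv p) * ((p : Mv p) * CMv p b));
              iota2 p ((p : Mv p) * CMv p (phiW p b) - CMv p b * (fX1p * fX1p)),
              iota2 p ((p : Mv p) * (CMv p b * fX1p))]) i' j' =
        iota2 p (MvPowerSeries.X 1 *
          !![(p : Mv p) * CMv p (phiW p b) - CMv p b * (fX1p * fX1p),
              2 * ((p : Mv p) * (CMv p b * fX1p)) +
                MvPowerSeries.X 1 * (CMv p b * (fX1p * fX1p)) -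
                MvPowerSeries.X 1 * ((p : Mv p) * CMv p (phiW p b));
              0, CMv p b * (fX1p * fX1p) - (p : Mv p) * CMv p (phiW p b)] i' j') := by
      intro i' j'
      fin_cases i' <;> fin_cases j' <;>
        simp only [Fin.zero_eta, Fin.mk_one, Fin.isValue, Matrix.of_apply, Matrix.mul_apply, Fin.sum_univ_two, Matrix.sub_apply, Matrix.cons_val',
          Matrix.cons_val_zero, Matrix.cons_val_one, Matrix.head_cons, Matrix.head_fin_const,
          Matrix.empty_val', Matrix.cons_val_fin_one, map_mul, map_sub, map_add, map_neg,
          map_one, map_zero, map_ofNat, mul_zero, map_natCast] <;> ring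
    exact hD i j

end
end

section
/- For every integer ℓ ≥ 1: if ℓ is odd then Y_ℓ = 0 and every entry of Z_ℓ is divisible by X₂^{p^{ℓ−1}} in W[[X₁,X₂]]; if ℓ is even then Z_ℓ = 0 and every entry of Y_ℓ is divisible by X₂^{p^{ℓ−1}} in W[[X₁,X₂]]. -/
noncomputable section

/-- Let `U ∈ W` and let `Y_ℓ`, `Z_ℓ` (`ℓ ≥ 1`) be the 2×2 matrices over
`W[[X₁,X₂]]` defined by `Y₁ = 0`,
`Z₁ = U·[[X₂·f(X₁^p), −p·X₂ − X₂²·f(X₁^p)], [0, −X₂·f(X₁^p)]]` and the recursions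
`Y_{ℓ+1} = [[X₁, p], [1, 0]]·φ(Z_ℓ)·[[0, p], [1, −X₁]]`,
`Z_{ℓ+1} = [[X₂, p], [1, 0]]·φ(Y_ℓ)·[[0, p], [1, −X₂]]`, where `φ` is the ring endomorphism
of `W[[X₁,X₂]]` acting as `φ_W` on coefficients and sending `Xᵢ` to `Xᵢ^p`, applied
entrywise.  Then for every `ℓ ≥ 1`: if `ℓ` is odd then `Y_ℓ = 0` and every entry of `Z_ℓ` is
divisible by `X₂^{p^{ℓ−1}}`; if `ℓ` is even then `Z_ℓ = 0` and every entry of `Y_ℓ` is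
divisible by `X₂^{p^{ℓ−1}}`. -/
theorem statement_5 (p : ℕ) [Fact p.Prime]
    (U : W p)
    -- `Φ` is the ring endomorphism `φ` of `W[[X₁,X₂]]` (characterized by coefficients):
    (Φ : Mv p →+* Mv p)
    (hΦ₁ : ∀ (F : Mv p) (d : Fin 2 →₀ ℕ),
      MvPowerSeries.coeff (p • d) (Φ F) = phiW p (MvPowerSeries.coeff d F))
    (hΦ₂ : ∀ (F : Mv p) (d : Fin 2 →₀ ℕ),
      (¬ ∃ e : Fin 2 →₀ ℕ, d = p • e) → MvPowerSeries.coeff d (Φ F) = 0)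
    -- `fX1p = f(X₁^p)`:
    (fX1p : Mv p) (hfX1p : IsEvalAtX1Pow p p (fSeries p) fX1p)
    -- the sequences `Y_ℓ`, `Z_ℓ`:
    (Yseq Zseq : ℕ → Matrix (Fin 2) (Fin 2) (Mv p))
    (hY1 : Yseq 1 = 0)
    (hZ1 : Zseq 1 =
      !![CMv p U * (MvPowerSeries.X 1 * fX1p),
          CMv p U * (-((p : Mv p) * MvPowerSeries.X 1) - (MvPowerSeries.X 1) ^ 2 * fX1p);
          0, CMv p U * (-(MvPowerSeries.X 1 * fX1p))])
    (hrecY : ∀ l, 1 ≤ l → Yseq (l + 1) =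
      !![(MvPowerSeries.X 0 : Mv p), ((p : Mv p)); 1, 0] * (Zseq l).map ⇑Φ *
        !![0, ((p : Mv p)); 1, -(MvPowerSeries.X 0 : Mv p)])
    (hrecZ : ∀ l, 1 ≤ l → Zseq (l + 1) =
      !![(MvPowerSeries.X 1 : Mv p), ((p : Mv p)); 1, 0] * (Yseq l).map ⇑Φ *
        !![0, ((p : Mv p)); 1, -(MvPowerSeries.X 1 : Mv p)]) :
    ∀ l, 1 ≤ l →
      (Odd l → Yseq l = 0 ∧
        ∀ i j, (MvPowerSeries.X 1 : Mv p) ^ (p ^ (l - 1)) ∣ Zseq l i j) ∧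
      (Even l → Zseq l = 0 ∧
        ∀ i j, (MvPowerSeries.X 1 : Mv p) ^ (p ^ (l - 1)) ∣ Yseq l i j) := by
  have hp : 0 < p := (Fact.out : p.Prime).pos
  -- Φ multiplies X₂-divisibility order by p
  have hΦdvd : ∀ (m : ℕ) (F : Mv p), (MvPowerSeries.X 1 : Mv p) ^ m ∣ F →
      (MvPowerSeries.X 1 : Mv p) ^ (p * m) ∣ Φ F := by
    intro m F hF
    rw [MvPowerSeries.X_pow_dvd_iff] at hF ⊢
    intro d hd
    by_cases h : ∃ e : Fin 2 →₀ ℕ, d = p • e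
    · obtain ⟨e, rfl⟩ := h
      rw [hΦ₁]
      have : e 1 < m := by
        have : p * e 1 < p * m := by simpa [Finsupp.smul_apply, mul_comm] using hd
        exact lt_of_mul_lt_mul_left this (Nat.zero_le p)
      rw [hF e this, map_zero]
    · exact hΦ₂ F d h
  -- product divisibility lemma
  have hmul : ∀ (m : Mv p) (A M B : Matrix (Fin 2) (Fin 2) (Mv p)),
      (∀ i j, m ∣ M i j) → ∀ i j, m ∣ (A * M * B) i j := by
    intro m A M B h i j
    rw [Matrix.mul_apply]
    refine Finset.dvd_sum fun k _ => ?_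
    rw [Matrix.mul_apply, Finset.sum_mul]
    refine Finset.dvd_sum fun k' _ => ?_
    exact ((h k' k).mul_left _).mul_right _
  intro l hl
  induction l, hl using Nat.le_induction with
  | base =>
    constructor
    · intro _
      refine ⟨hY1, fun i j => ?_⟩
      have hX : (MvPowerSeries.X 1 : Mv p) ^ p ^ (1 - 1) = MvPowerSeries.X 1 := by
        norm_num
      rw [hX, hZ1]
      fin_cases i <;> fin_cases j <;> simp only [Matrix.cons_val', Matrix.cons_val_zero,
        Matrix.cons_val_one, Matrix.head_cons, Matrix.empty_val', Matrix.cons_val_fin_one,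
        Matrix.head_fin_const, Fin.isValue, Matrix.of_apply, Fin.zero_eta, Fin.mk_one]
      · exact ⟨CMv p U * fX1p, by ring⟩
      · exact ⟨CMv p U * (-(p : Mv p) - MvPowerSeries.X 1 * fX1p), by ring⟩
      · exact dvd_zero _
      · exact ⟨CMv p U * (-fX1p), by ring⟩
    · intro h
      exact absurd h (by simp)
  | succ l hl ih =>
    have hstep : p ^ (l + 1 - 1) = p * p ^ (l - 1) := by
      rw [Nat.add_sub_cancel]
      conv_lhs => rw [← Nat.succ_pred_eq_of_pos hl]
      rw [pow_succ, mul_comm]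
      rfl
    constructor
    · -- l + 1 odd, so l even
      intro hodd
      have hev : Even l := Nat.not_odd_iff_even.mp (Nat.odd_add_one.mp hodd)
      obtain ⟨hZ0, hYdvd⟩ := (ih).2 hev
      constructor
      · rw [hrecY l hl, hZ0]
        simp
      · intro i j
        rw [hrecZ l hl, hstep]
        refine hmul _ _ _ _ (fun i j => ?_) i j
        rw [Matrix.map_apply]
        exact hΦdvd _ _ (hYdvd i j)
    · -- l + 1 even, so l odd
      intro hev
      have hodd : Odd l := Nat.not_even_iff_odd.mp (Nat.even_add_one.mp hev)
      obtain ⟨hY0, hZdvd⟩ := (ih).1 hodd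
      constructor
      · rw [hrecZ l hl, hY0]
        simp
      · intro i j
        rw [hrecY l hl, hstep]
        refine hmul _ _ _ _ (fun i j => ?_) i j
        rw [Matrix.map_apply]
        exact hΦdvd _ _ (hZdvd i j)

end
end

section
/- Assume U is a unit of W. For every integer ℓ ≥ 1 there exist a power series u_ℓ ∈ W[[X₁]] whose image in 𝔽[[X₁]] (reduction modulo p) is nonzero and a power series g_ℓ ∈ W[[X₁,X₂]] such that: if ℓ is odd, the upper-right entry of Z_ℓ equals u_ℓ·ε₊(ℓ) + p·X₂^{p^{ℓ−1}}·g_ℓ; and if ℓ is even, the upper-right entry of Y_ℓ equals u_ℓ·ε₋(ℓ) + p·X₂^{p^{ℓ−1}}·g_ℓ. (This is the structure result for the entries α_k, β_k driving the computation of the multiplicities of the vertical components.) -/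
noncomputable section

namespace St6

open MvPowerSeries Finset

variable {p : ℕ} [Fact p.Prime]

/-- entries depend on `X₁` only -/
def X1only (F : Mv p) : Prop :=
  ∀ d : Fin 2 →₀ ℕ, d 1 ≠ 0 → MvPowerSeries.coeff d F = 0

lemma X1only.mul {F G : Mv p} (hF : X1only F) (hG : X1only G) : X1only (F * G) := by
  intro d hd
  rw [MvPowerSeries.coeff_mul]
  refine Finset.sum_eq_zero fun x hx => ?_
  rw [Finset.HasAntidiagonal.mem_antidiagonal] at hx
  rcases Nat.eq_zero_or_pos (x.1 1) with h | h
  · have h2 : x.2 1 ≠ 0 := by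
      intro h2; apply hd; rw [← hx]; simp [h, h2]
    rw [hG _ h2, mul_zero]
  · rw [hF _ h.ne', zero_mul]

lemma X1only.neg {F : Mv p} (hF : X1only F) : X1only (-F) := by
  intro d hd; rw [map_neg, hF d hd, neg_zero]

lemma X1only_X0 : X1only (MvPowerSeries.X 0 : Mv p) := by
  intro d hd
  rw [MvPowerSeries.coeff_X, if_neg]
  intro h
  apply hd
  rw [h]
  simp

lemma X1only_C (a : W p) : X1only (CMv p a) := by
  intro d hd
  rw [show (CMv p a : Mv p) = (MvPowerSeries.C : W p →+* Mv p) a from rfl,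
    MvPowerSeries.coeff_C, if_neg]
  intro h
  apply hd
  rw [h]
  rfl

lemma smul_inj {e e' : Fin 2 →₀ ℕ} (h : p • e = p • e') : e = e' := by
  have hp : 0 < p := (Fact.out : p.Prime).pos
  ext a
  have h2 : p * e a = p * e' a := by
    have := DFunLike.congr_fun h a
    simpa using this
  exact Nat.eq_of_mul_eq_mul_left hp h2

section Phi

variable (Φ : Mv p →+* Mv p)
    (hΦ₁ : ∀ (F : Mv p) (d : Fin 2 →₀ ℕ),
      MvPowerSeries.coeff (p • d) (Φ F) = phiW p (MvPowerSeries.coeff d F))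
    (hΦ₂ : ∀ (F : Mv p) (d : Fin 2 →₀ ℕ),
      (¬ ∃ e : Fin 2 →₀ ℕ, d = p • e) → MvPowerSeries.coeff d (Φ F) = 0)

include hΦ₁ hΦ₂ in
lemma phi_X (s : Fin 2) : Φ (MvPowerSeries.X s) = (MvPowerSeries.X s : Mv p) ^ p := by
  ext d
  rw [MvPowerSeries.coeff_X_pow]
  by_cases h : ∃ e : Fin 2 →₀ ℕ, d = p • e
  · obtain ⟨e, rfl⟩ := h
    rw [hΦ₁]
    by_cases he : e = Finsupp.single s 1
    · subst he
      rw [MvPowerSeries.coeff_X, if_pos rfl, map_one, if_pos]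
      rw [Finsupp.smul_single]
      simp
    · rw [MvPowerSeries.coeff_X, if_neg he, map_zero, if_neg]
      intro hd
      apply he
      apply smul_inj (p := p)
      rw [hd, Finsupp.smul_single]
      simp
  · rw [hΦ₂ _ _ h, if_neg]
    intro hd
    exact h ⟨Finsupp.single s 1, by rw [hd, Finsupp.smul_single]; simp⟩

include hΦ₁ hΦ₂ in
lemma phi_X1only {F : Mv p} (hF : X1only F) : X1only (Φ F) := by
  intro d hd
  by_cases h : ∃ e : Fin 2 →₀ ℕ, d = p • e
  · obtain ⟨e, rfl⟩ := h
    rw [hΦ₁]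
    have he : e 1 ≠ 0 := by
      intro h0
      apply hd
      simp [h0]
    rw [hF e he, map_zero]
  · exact hΦ₂ F d h

end Phi

lemma not_dvd_phiW {c : W p} (hc : ¬ (p : W p) ∣ c) : ¬ (p : W p) ∣ phiW p c := by
  rintro ⟨e, he⟩
  apply hc
  have h2 : (WittVector.frobeniusEquiv p (Fbar p)) c = (p : W p) * e := he
  have h3 := congrArg (WittVector.frobeniusEquiv p (Fbar p)).symm h2
  rw [RingEquiv.symm_apply_apply, map_mul, map_natCast] at h3
  exact ⟨_, h3⟩

lemma not_dvd_of_coeff {F : Mv p} (d : Fin 2 →₀ ℕ)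
    (h : ¬ (p : W p) ∣ MvPowerSeries.coeff d F) : ¬ (p : Mv p) ∣ F := by
  rintro ⟨g, rfl⟩
  apply h
  refine ⟨MvPowerSeries.coeff d g, ?_⟩
  rw [← map_natCast ((MvPowerSeries.C : W p →+* Mv p)) p, MvPowerSeries.coeff_C_mul]

lemma not_p_dvd_neg_U {U : W p} (hU : IsUnit U) : ¬ (p : W p) ∣ -U := by
  rw [dvd_neg]
  intro h
  exact (WittVector.irreducible p).not_isUnit (isUnit_of_dvd_unit h hU)

lemma sum_step (p l : ℕ) :
    ∑ i ∈ (Finset.range (l+1)).filter (fun i => Odd (l+1+i)), p ^ i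
      = (if Even l then 1 else 0)
        + p * ∑ i ∈ (Finset.range l).filter (fun i => Odd (l+i)), p ^ i := by
  rw [Finset.sum_filter, Finset.sum_filter, Finset.sum_range_succ', Finset.mul_sum, add_comm]
  congr 1
  · by_cases h : Even l
    · rw [if_pos h, if_pos, pow_zero]
      simp only [Nat.odd_iff, Nat.even_iff] at h ⊢; omega
    · rw [if_neg h, if_neg]
      simp only [Nat.odd_iff, Nat.even_iff] at h ⊢; omega
  · refine Finset.sum_congr rfl fun i _ => ?_
    by_cases h : Odd (l + i)
    · rw [if_pos h, if_pos, pow_succ, mul_comm]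
      simp only [Nat.odd_iff] at h ⊢; omega
    · rw [if_neg h, if_neg, mul_zero]
      simp only [Nat.odd_iff] at h ⊢; omega

lemma entry01 {R : Type*} [CommRing R] (x c : R) (A : Matrix (Fin 2) (Fin 2) R) :
    (!![x, c; 1, 0] * A * !![0, c; 1, -x]) 0 1
      = c * x * A 0 0 - x^2 * A 0 1 + c^2 * A 1 0 - c * x * A 1 1 := by
  simp [Matrix.mul_apply, Matrix.vecMul, dotProduct, Fin.sum_univ_two]
  ring

lemma entry_dvd {R : Type*} [CommRing R] (x : R) (A B C : Matrix (Fin 2) (Fin 2) R)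
    (h : ∀ i j, x ∣ A i j) (i j : Fin 2) : x ∣ (B * A * C) i j := by
  rw [Matrix.mul_apply]
  refine Finset.dvd_sum fun m _ => ?_
  rw [Matrix.mul_apply]
  exact Dvd.dvd.mul_right (Finset.dvd_sum fun k _ => (h k m).mul_left _) _

end St6

/-- Assume `U` is a unit of `W`, and let `Y_ℓ`, `Z_ℓ` (`ℓ ≥ 1`) be the 2×2
matrices over `W[[X₁,X₂]]` defined by `Y₁ = 0`,
`Z₁ = U·[[X₂·f(X₁^p), −p·X₂ − X₂²·f(X₁^p)], [0, −X₂·f(X₁^p)]]` and the recursions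
`Y_{ℓ+1} = [[X₁, p], [1, 0]]·φ(Z_ℓ)·[[0, p], [1, −X₁]]`,
`Z_{ℓ+1} = [[X₂, p], [1, 0]]·φ(Y_ℓ)·[[0, p], [1, −X₂]]`.  Then for every `ℓ ≥ 1` there are a
power series `u_ℓ ∈ W[[X₁]]` whose reduction modulo `p` (its image in `𝔽[[X₁]]`) is nonzero
and a power series `g_ℓ ∈ W[[X₁,X₂]]` such that: if `ℓ` is odd the upper-right entry of
`Z_ℓ` equals `u_ℓ·ε₊(ℓ) + p·X₂^{p^{ℓ−1}}·g_ℓ`, and if `ℓ` is even the upper-right entry of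
`Y_ℓ` equals `u_ℓ·ε₋(ℓ) + p·X₂^{p^{ℓ−1}}·g_ℓ`, where
`ε₊(ℓ) = X₂^{2·∑_{0≤i<ℓ, i even} p^i}` and `ε₋(ℓ) = X₂^{2·∑_{0≤i<ℓ, i odd} p^i}`.
(Here `u_ℓ ∈ W[[X₁]]` means that all coefficients of `u_ℓ` at monomials involving `X₂`
vanish, and nonvanishing of the reduction modulo `p` means `p ∤ u_ℓ` in `W[[X₁,X₂]]`.) -/
theorem statement_6 (p : ℕ) [Fact p.Prime]
    (U : W p) (hU : IsUnit U)
    -- `Φ` is the ring endomorphism `φ` of `W[[X₁,X₂]]` (characterized by coefficients):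
    (Φ : Mv p →+* Mv p)
    (hΦ₁ : ∀ (F : Mv p) (d : Fin 2 →₀ ℕ),
      MvPowerSeries.coeff (p • d) (Φ F) = phiW p (MvPowerSeries.coeff d F))
    (hΦ₂ : ∀ (F : Mv p) (d : Fin 2 →₀ ℕ),
      (¬ ∃ e : Fin 2 →₀ ℕ, d = p • e) → MvPowerSeries.coeff d (Φ F) = 0)
    -- `fX1p = f(X₁^p)`:
    (fX1p : Mv p) (hfX1p : IsEvalAtX1Pow p p (fSeries p) fX1p)
    -- the sequences `Y_ℓ`, `Z_ℓ`:
    (Yseq Zseq : ℕ → Matrix (Fin 2) (Fin 2) (Mv p))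
    (hY1 : Yseq 1 = 0)
    (hZ1 : Zseq 1 =
      !![CMv p U * (MvPowerSeries.X 1 * fX1p),
          CMv p U * (-((p : Mv p) * MvPowerSeries.X 1) - (MvPowerSeries.X 1) ^ 2 * fX1p);
          0, CMv p U * (-(MvPowerSeries.X 1 * fX1p))])
    (hrecY : ∀ l, 1 ≤ l → Yseq (l + 1) =
      !![(MvPowerSeries.X 0 : Mv p), ((p : Mv p)); 1, 0] * (Zseq l).map ⇑Φ *
        !![0, ((p : Mv p)); 1, -(MvPowerSeries.X 0 : Mv p)])
    (hrecZ : ∀ l, 1 ≤ l → Zseq (l + 1) =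
      !![(MvPowerSeries.X 1 : Mv p), ((p : Mv p)); 1, 0] * (Yseq l).map ⇑Φ *
        !![0, ((p : Mv p)); 1, -(MvPowerSeries.X 1 : Mv p)]) :
    ∀ l, 1 ≤ l → ∃ uu gg : Mv p,
      (∀ d : Fin 2 →₀ ℕ, d 1 ≠ 0 → MvPowerSeries.coeff d uu = 0) ∧
      ¬ ((p : Mv p) ∣ uu) ∧
      (Odd l → Zseq l 0 1 =
        uu * (MvPowerSeries.X 1 : Mv p) ^
            (2 * ∑ i ∈ (Finset.range l).filter (fun i => Even i), p ^ i) +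
          (p : Mv p) * (MvPowerSeries.X 1 : Mv p) ^ (p ^ (l - 1)) * gg) ∧
      (Even l → Yseq l 0 1 =
        uu * (MvPowerSeries.X 1 : Mv p) ^
            (2 * ∑ i ∈ (Finset.range l).filter (fun i => Odd i), p ^ i) +
          (p : Mv p) * (MvPowerSeries.X 1 : Mv p) ^ (p ^ (l - 1)) * gg) := by
  classical
  have hphiX2 : Φ (MvPowerSeries.X 1) = (MvPowerSeries.X 1 : Mv p) ^ p :=
    St6.phi_X Φ hΦ₁ hΦ₂ 1
  have key : ∀ l, 1 ≤ l → ∃ uu gg : Mv p,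
      St6.X1only uu ∧
      (∃ d : Fin 2 →₀ ℕ, ¬ (p : W p) ∣ MvPowerSeries.coeff d uu) ∧
      (Odd l → (∀ i j, (MvPowerSeries.X 1 : Mv p) ^ (p ^ (l - 1)) ∣ Zseq l i j) ∧
        Zseq l 0 1 = uu * (MvPowerSeries.X 1 : Mv p) ^
            (2 * ∑ i ∈ (Finset.range l).filter (fun i => Odd (l + i)), p ^ i) +
          (p : Mv p) * (MvPowerSeries.X 1 : Mv p) ^ (p ^ (l - 1)) * gg) ∧
      (Even l → (∀ i j, (MvPowerSeries.X 1 : Mv p) ^ (p ^ (l - 1)) ∣ Yseq l i j) ∧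
        Yseq l 0 1 = uu * (MvPowerSeries.X 1 : Mv p) ^
            (2 * ∑ i ∈ (Finset.range l).filter (fun i => Odd (l + i)), p ^ i) +
          (p : Mv p) * (MvPowerSeries.X 1 : Mv p) ^ (p ^ (l - 1)) * gg) := by
    intro l hl
    induction l, hl using Nat.le_induction with
    | base =>
      refine ⟨-(CMv p U * fX1p), -(CMv p U), ((St6.X1only_C U).mul hfX1p.2.1).neg, ?_, ?_, ?_⟩
      · refine ⟨Finsupp.single 0 (p * 1), ?_⟩
        have hc : MvPowerSeries.coeff (Finsupp.single 0 (p * 1)) (-(CMv p U * fX1p))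
            = -U := by
          rw [map_neg, MvPowerSeries.coeff_C_mul, hfX1p.1 1]
          have h1 : PowerSeries.coeff 1 (fSeries p) = 1 := by
            rw [fSeries, PowerSeries.coeff_mk, if_pos ⟨0, by simp⟩]
          rw [h1]
          push_cast
          ring
        rw [hc]
        exact St6.not_p_dvd_neg_U hU
      · intro _
        have z00 : Zseq 1 0 0 = CMv p U * (MvPowerSeries.X 1 * fX1p) := by rw [hZ1]; simp
        have z01 : Zseq 1 0 1 = CMv p U * (-((p : Mv p) * MvPowerSeries.X 1) -
            (MvPowerSeries.X 1) ^ 2 * fX1p) := by rw [hZ1]; simp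
        have z10 : Zseq 1 1 0 = 0 := by rw [hZ1]; simp
        have z11 : Zseq 1 1 1 = CMv p U * (-(MvPowerSeries.X 1 * fX1p)) := by rw [hZ1]; simp
        have h1 : (p : ℕ) ^ (1 - 1) = 1 := by norm_num
        constructor
        · intro i j
          rw [h1, pow_one]
          fin_cases i <;> fin_cases j
          · show MvPowerSeries.X 1 ∣ Zseq 1 0 0
            rw [z00]; exact ⟨CMv p U * fX1p, by ring⟩
          · show MvPowerSeries.X 1 ∣ Zseq 1 0 1
            rw [z01]
            exact ⟨CMv p U * (-(p : Mv p) - MvPowerSeries.X 1 * fX1p), by ring⟩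
          · show MvPowerSeries.X 1 ∣ Zseq 1 1 0
            rw [z10]; exact dvd_zero _
          · show MvPowerSeries.X 1 ∣ Zseq 1 1 1
            rw [z11]; exact ⟨-(CMv p U * fX1p), by ring⟩
        · have hS : ∑ i ∈ (Finset.range 1).filter (fun i => Odd (1 + i)), p ^ i = 1 := by
            rw [Finset.sum_filter, Finset.sum_range_one]
            simp [Nat.odd_iff]
          rw [z01, hS, h1]
          ring
      · intro h
        exact absurd h (by simp)
    | succ l hl ih =>
      obtain ⟨u, g, hu1, ⟨d, hd⟩, hoZ, heY⟩ := ih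
      obtain ⟨m, rfl⟩ : ∃ m, l = m + 1 := ⟨l - 1, by omega⟩
      simp only [Nat.add_sub_cancel] at hoZ heY ⊢
      rcases Nat.even_or_odd (m + 1) with hev | hod
      · -- l = m+1 even, l+1 odd : use hrecZ and Yseq data
        obtain ⟨hdvd, hsh⟩ := heY hev
        obtain ⟨c00, h00⟩ := hdvd 0 0
        obtain ⟨c10, h10⟩ := hdvd 1 0
        obtain ⟨c11, h11⟩ := hdvd 1 1
        refine ⟨-Φ u,
          MvPowerSeries.X 1 * Φ c00 + (p : Mv p) * Φ c10 - MvPowerSeries.X 1 * Φ c11 -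
            (MvPowerSeries.X 1) ^ 2 * Φ g,
          (St6.phi_X1only Φ hΦ₁ hΦ₂ hu1).neg, ?_, ?_, ?_⟩
        · exact ⟨p • d, by rw [map_neg, hΦ₁, dvd_neg]; exact St6.not_dvd_phiW hd⟩
        · intro _
          constructor
          · intro i j
            rw [hrecZ (m + 1) hl]
            refine St6.entry_dvd _ _ _ _ ?_ i j
            intro i j
            obtain ⟨c, hc⟩ := hdvd i j
            refine ⟨Φ c, ?_⟩
            rw [Matrix.map_apply, hc, map_mul, map_pow, hphiX2, ← pow_mul,
              show (p : ℕ) * p ^ m = p ^ (m + 1) from by rw [pow_succ]; ring]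
          · rw [hrecZ (m + 1) hl, St6.entry01]
            simp only [Matrix.map_apply]
            rw [h00, h10, h11, hsh]
            rw [map_mul, map_pow, hphiX2, ← pow_mul]
            rw [map_mul, map_pow, hphiX2, ← pow_mul]
            rw [map_mul, map_pow, hphiX2, ← pow_mul]
            rw [map_add, map_mul, map_mul, map_mul, map_pow, map_pow, hphiX2,
              ← pow_mul, ← pow_mul, map_natCast]
            rw [St6.sum_step p (m + 1), if_pos hev]
            ring
        · intro h
          exfalso
          simp only [Nat.even_iff] at h hev
          omega
      · -- l = m+1 odd, l+1 even : use hrecY and Zseq data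
        obtain ⟨hdvd, hsh⟩ := hoZ hod
        obtain ⟨c00, h00⟩ := hdvd 0 0
        obtain ⟨c10, h10⟩ := hdvd 1 0
        obtain ⟨c11, h11⟩ := hdvd 1 1
        refine ⟨-(MvPowerSeries.X 0 ^ 2 * Φ u),
          MvPowerSeries.X 0 * Φ c00 + (p : Mv p) * Φ c10 - MvPowerSeries.X 0 * Φ c11 -
            (MvPowerSeries.X 0) ^ 2 * Φ g,
          (((by rw [sq]; exact St6.X1only_X0.mul St6.X1only_X0) : St6.X1only
              ((MvPowerSeries.X 0 : Mv p) ^ 2)).mul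
            (St6.phi_X1only Φ hΦ₁ hΦ₂ hu1)).neg, ?_, ?_, ?_⟩
        · refine ⟨Finsupp.single 0 2 + p • d, ?_⟩
          rw [map_neg, MvPowerSeries.X_pow_eq, MvPowerSeries.coeff_add_monomial_mul,
            one_mul, hΦ₁, dvd_neg]
          exact St6.not_dvd_phiW hd
        · intro h
          exfalso
          simp only [Nat.odd_iff] at h hod
          omega
        · intro _
          constructor
          · intro i j
            rw [hrecY (m + 1) hl]
            refine St6.entry_dvd _ _ _ _ ?_ i j
            intro i j
            obtain ⟨c, hc⟩ := hdvd i j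
            refine ⟨Φ c, ?_⟩
            rw [Matrix.map_apply, hc, map_mul, map_pow, hphiX2, ← pow_mul,
              show (p : ℕ) * p ^ m = p ^ (m + 1) from by rw [pow_succ]; ring]
          · rw [hrecY (m + 1) hl, St6.entry01]
            simp only [Matrix.map_apply]
            rw [h00, h10, h11, hsh]
            rw [map_mul, map_pow, hphiX2, ← pow_mul]
            rw [map_mul, map_pow, hphiX2, ← pow_mul]
            rw [map_mul, map_pow, hphiX2, ← pow_mul]
            rw [map_add, map_mul, map_mul, map_mul, map_pow, map_pow, hphiX2,
              ← pow_mul, ← pow_mul, map_natCast]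
            rw [St6.sum_step p (m + 1),
              if_neg (by simp only [Nat.even_iff]; simp only [Nat.odd_iff] at hod; omega),
              zero_add]
            ring
  intro l hl
  obtain ⟨uu, gg, h1, ⟨d, hd⟩, hoZ, heY⟩ := key l hl
  refine ⟨uu, gg, h1, St6.not_dvd_of_coeff d hd, ?_, ?_⟩
  · intro ho
    have h2 := (hoZ ho).2
    have hfe : (Finset.range l).filter (fun i => Even i)
        = (Finset.range l).filter (fun i => Odd (l + i)) := by
      refine Finset.filter_congr fun i _ => ?_
      simp only [Nat.odd_iff] at ho
      simp only [Nat.even_iff, Nat.odd_iff]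
      omega
    rw [hfe]
    exact h2
  · intro he
    have h2 := (heY he).2
    have hfe : (Finset.range l).filter (fun i => Odd i)
        = (Finset.range l).filter (fun i => Odd (l + i)) := by
      refine Finset.filter_congr fun i _ => ?_
      simp only [Nat.even_iff] at he
      simp only [Nat.odd_iff]
      omega
    rw [hfe]
    exact h2


end
end

section
/- There is an inclusion of ideals (p^{2k+1}, x^{p^k}) ⊆ m·(α, β) in A. (Abstract form of Lemma 3.3.3 of the paper; in particular p^{2k+1} and x^{p^k} both lie in m·(α, β).) -/
noncomputable section

/-- `ε₊(ℓ) = x ^ (2·∑_{0 ≤ i < ℓ, i even} p^i)`. -/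
def epsPlus {A : Type*} [CommRing A] (p : ℕ) (x : A) (l : ℕ) : A :=
  x ^ (2 * ∑ i ∈ (Finset.range l).filter (fun i => Even i), p ^ i)

/-- `ε₋(ℓ) = x ^ (2·∑_{0 ≤ i < ℓ, i odd} p^i)`. -/
def epsMinus {A : Type*} [CommRing A] (p : ℕ) (x : A) (l : ℕ) : A :=
  x ^ (2 * ∑ i ∈ (Finset.range l).filter (fun i => Odd i), p ^ i)

/-- `α = ∑_{0≤ℓ≤k, ℓ even} u_ℓ·p^{k−ℓ}·ε₋(ℓ) + ∑_{0≤ℓ<k, ℓ odd} C_ℓ·p^{k−ℓ}·ε₊(ℓ)`. -/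
def alphaEl {A : Type*} [CommRing A] (p : ℕ) (x : A) (k : ℕ) (u C : ℕ → A) : A :=
  ∑ l ∈ (Finset.range (k + 1)).filter (fun l => Even l),
      u l * (p : A) ^ (k - l) * epsMinus p x l +
    ∑ l ∈ (Finset.range k).filter (fun l => Odd l), C l * (p : A) ^ (k - l) * epsPlus p x l

/-- `β = ∑_{0≤ℓ≤k, ℓ odd} u_ℓ·p^{k−ℓ}·ε₊(ℓ) + ∑_{0≤ℓ<k, ℓ even} C_ℓ·p^{k−ℓ}·ε₋(ℓ)`. -/
def betaEl {A : Type*} [CommRing A] (p : ℕ) (x : A) (k : ℕ) (u C : ℕ → A) : A :=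
  ∑ l ∈ (Finset.range (k + 1)).filter (fun l => Odd l),
      u l * (p : A) ^ (k - l) * epsPlus p x l +
    ∑ l ∈ (Finset.range k).filter (fun l => Even l), C l * (p : A) ^ (k - l) * epsMinus p x l

namespace Stmt8

/-- x-exponent of the `ε`-power appearing at slot `l`. -/
def EE (p l : ℕ) : ℕ := 2 * ∑ i ∈ Finset.range l, (if i % 2 = l % 2 then 0 else p ^ i)

theorem EE_zero (p : ℕ) : EE p 0 = 0 := by simp [EE]

theorem EE_one (p : ℕ) : EE p 1 = 2 := by simp [EE]

theorem EE_add_two (p l : ℕ) : EE p (l+2) = EE p l + 2 * p^(l+1) := by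
  have h1 : (l+2) % 2 = l % 2 := Nat.add_mod_right l 2
  have h2 : ¬((l+1) % 2 = l % 2) := by omega
  simp only [EE, h1, Finset.sum_range_succ, if_pos rfl, if_neg h2, add_zero, if_true]
  ring

theorem EE_ge_two {p : ℕ} (hp : 3 ≤ p) : ∀ l, 1 ≤ l → 2 ≤ EE p l
  | 0, h => by omega
  | 1, _ => by rw [EE_one]
  | (n+2), _ => by
      rw [EE_add_two]
      have : 1 ≤ p^(n+1) := Nat.one_le_pow _ _ (by omega)
      omega

theorem EE_le_pow {p : ℕ} (hp : 3 ≤ p) : ∀ l, EE p l ≤ p ^ l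
  | 0 => by simp [EE_zero]
  | 1 => by rw [EE_one, pow_one]; omega
  | (n+2) => by
      have ih := EE_le_pow hp n
      rw [EE_add_two]
      have h1 : p^n ≤ p^(n+1) := Nat.pow_le_pow_right (by omega) (by omega)
      have h2 : 3 * p^(n+1) ≤ p * p^(n+1) := Nat.mul_le_mul_right _ hp
      have h3 : p^(n+2) = p * p^(n+1) := by ring
      omega

theorem key1 {p : ℕ} (hp : 3 ≤ p) (l : ℕ) : EE p (l+1) + 1 ≤ EE p l + p^(l+1) := by
  rcases Nat.eq_zero_or_pos l with rfl|hl
  · rw [EE_one, EE_zero, pow_one]; omega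
  · have h1 := EE_le_pow hp (l+1)
    have h2 := EE_ge_two hp l hl
    omega

theorem consec {p : ℕ} (hp : 3 ≤ p) (l : ℕ) :
    2 * EE p (l+1) + 2 ≤ EE p l + EE p (l+2) := by
  have h1 := key1 hp l
  have h2 := EE_add_two p l
  omega

theorem LD {p : ℕ} (hp : 3 ≤ p) : ∀ (c a : ℕ), a ≤ c →
    EE p (a+1) + EE p c + (c - a) ≤ EE p a + EE p (c+1) := by
  intro c
  induction c with
  | zero => intro a ha; interval_cases a; omega
  | succ n ih =>
      intro a ha
      have e : n + 1 + 1 = n + 2 := by omega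
      rw [e]
      rcases Nat.eq_or_lt_of_le ha with rfl|hlt
      · rw [e]; omega
      · have h1 := ih a (by omega)
        have h2 := consec hp n
        omega

theorem conv {p : ℕ} (hp : 3 ≤ p) : ∀ (t a c : ℕ), a + t ≤ c →
    EE p (a+t) + EE p c + t ≤ EE p a + EE p (c+t) := by
  intro t
  induction t with
  | zero => intro a c _; simp
  | succ n ih =>
      intro a c h
      have h1 := LD hp (c+n) a (by omega)
      have h2 := ih (a+1) c (by omega)
      have e1 : a + (n+1) = (a+1) + n := by omega
      have e2 : c + (n+1) = (c+n) + 1 := by omega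
      rw [e1, e2]
      omega

theorem corI0 {p : ℕ} (hp : 3 ≤ p) {u i : ℕ} (v : ℕ) (hui : u ≤ i) (huv : u + v = 2*i) :
    EE p i + EE p i + (i - u) ≤ EE p u + EE p v := by
  have h := conv hp (i - u) u i (by omega)
  rw [show u + (i-u) = i from by omega] at h
  rw [show v = i + (i-u) from by omega]
  omega

theorem corG0 {p : ℕ} (hp : 3 ≤ p) {u i : ℕ} (v : ℕ) (hui : u ≤ i) (huv : u + v = 2*i+1) :
    EE p i + EE p (i+1) + (i - u) ≤ EE p u + EE p v := by
  have h := conv hp (i - u) u (i+1) (by omega)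
  rw [show u + (i-u) = i from by omega] at h
  rw [show v = (i+1) + (i-u) from by omega]
  omega

theorem EE_consec_sum (p : ℕ) : ∀ l, EE p l + EE p (l+1) = 2 * ∑ i ∈ Finset.range (l+1), p ^ i
  | 0 => by simp [EE_zero, EE_one]
  | (n+1) => by
      have ih := EE_consec_sum p n
      have h2 := EE_add_two p n
      have e : n + 1 + 1 = n + 2 := by omega
      rw [Finset.sum_range_succ, e]
      omega

theorem geom2 {p : ℕ} (hp : 3 ≤ p) : ∀ l, 2 * ∑ i ∈ Finset.range l, p ^ i ≤ p ^ l
  | 0 => by simp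
  | (n+1) => by
      have ih := geom2 hp n
      rw [Finset.sum_range_succ]
      have h2 : 3 * p^n ≤ p * p^n := Nat.mul_le_mul_right _ hp
      have h3 : p^(n+1) = p * p^n := by ring
      omega

theorem EE_even {p l : ℕ} (hl : l % 2 = 0) :
    2 * ∑ i ∈ (Finset.range l).filter (fun i => Odd i), p ^ i = EE p l := by
  unfold EE
  congr 1
  rw [Finset.sum_filter]
  refine Finset.sum_congr rfl fun i _ => ?_
  rcases Nat.mod_two_eq_zero_or_one i with h|h <;>
    simp [h, hl, Nat.odd_iff]

theorem EE_odd {p l : ℕ} (hl : l % 2 = 1) :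
    2 * ∑ i ∈ (Finset.range l).filter (fun i => Even i), p ^ i = EE p l := by
  unfold EE
  congr 1
  rw [Finset.sum_filter]
  refine Finset.sum_congr rfl fun i _ => ?_
  rcases Nat.mod_two_eq_zero_or_one i with h|h <;>
    simp [h, hl, Nat.even_iff]

theorem alpha_expand {A : Type*} [CommRing A] (p : ℕ) (x : A) (k : ℕ) (u C : ℕ → A) :
    alphaEl p x k u C = ∑ l ∈ Finset.range (k+1),
      (if l % 2 = 0 then u l else if l < k then C l else 0) * ((p:A)^(k-l) * x^(EE p l)) := by
  unfold alphaEl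
  rw [← Finset.sum_filter_add_sum_filter_not (Finset.range (k+1)) (fun l => l % 2 = 0)]
  congr 1
  · rw [show (Finset.range (k+1)).filter (fun l => Even l)
        = (Finset.range (k+1)).filter (fun l => l % 2 = 0) from
      Finset.filter_congr fun l _ => by simp [Nat.even_iff]]
    refine Finset.sum_congr rfl fun l hl => ?_
    have hl0 : l % 2 = 0 := (Finset.mem_filter.1 hl).2
    rw [if_pos hl0, epsMinus, EE_even hl0, mul_assoc]
  · conv_rhs => rw [Finset.sum_filter, Finset.sum_range_succ]
    have hk : (if ¬ k % 2 = 0 then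
        (if k % 2 = 0 then u k else if k < k then C k else 0) * ((p:A)^(k-k) * x^(EE p k))
        else 0) = 0 := by
      by_cases h : k % 2 = 0 <;> simp [h]
    rw [hk, add_zero]
    conv_lhs => rw [Finset.sum_filter]
    refine (Finset.sum_congr rfl fun l hl => ?_).symm
    have hlk : l < k := Finset.mem_range.1 hl
    by_cases h : l % 2 = 0
    · simp [h, Nat.odd_iff]
    · have h1 : l % 2 = 1 := by omega
      simp only [h, Nat.odd_iff, h1, if_neg, if_true, hlk, if_pos, not_false_iff]
      rw [epsPlus, EE_odd h1, mul_assoc]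
      simp [h1]

theorem beta_expand {A : Type*} [CommRing A] (p : ℕ) (x : A) (k : ℕ) (u C : ℕ → A) :
    betaEl p x k u C = ∑ l ∈ Finset.range (k+1),
      (if l % 2 = 1 then u l else if l < k then C l else 0) * ((p:A)^(k-l) * x^(EE p l)) := by
  unfold betaEl
  rw [← Finset.sum_filter_add_sum_filter_not (Finset.range (k+1)) (fun l => l % 2 = 1)]
  congr 1
  · rw [show (Finset.range (k+1)).filter (fun l => Odd l)
        = (Finset.range (k+1)).filter (fun l => l % 2 = 1) from
      Finset.filter_congr fun l _ => by simp [Nat.odd_iff]]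
    refine Finset.sum_congr rfl fun l hl => ?_
    have hl1 : l % 2 = 1 := (Finset.mem_filter.1 hl).2
    rw [if_pos hl1, epsPlus, EE_odd hl1, mul_assoc]
  · conv_rhs => rw [Finset.sum_filter, Finset.sum_range_succ]
    have hk : (if ¬ k % 2 = 1 then
        (if k % 2 = 1 then u k else if k < k then C k else 0) * ((p:A)^(k-k) * x^(EE p k))
        else 0) = 0 := by
      by_cases h : k % 2 = 1 <;> simp [h]
    rw [hk, add_zero]
    conv_lhs => rw [Finset.sum_filter]
    refine (Finset.sum_congr rfl fun l hl => ?_).symm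
    have hlk : l < k := Finset.mem_range.1 hl
    by_cases h : l % 2 = 1
    · simp [h, Nat.even_iff]
    · have h1 : l % 2 = 0 := by omega
      simp only [h, Nat.even_iff, h1, if_neg, if_true, hlk, if_pos, not_false_iff]
      rw [epsMinus, EE_even h1, mul_assoc]
      simp [h1]

end Stmt8

open Stmt8 in
/-- abstract form of Lemma 3.3.3 of the paper. -/
theorem statement_8 (p : ℕ) (hp : p.Prime) (hodd : Odd p)
    (A : Type*) [CommRing A] [IsNoetherianRing A] [IsLocalRing A]
    (x : A) (hmax : IsLocalRing.maximalIdeal A = Ideal.span {(p : A), x})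
    (hdim : ringKrullDim A = 2)
    (k : ℕ) (hk : 1 ≤ k) (u C : ℕ → A)
    (hu : ∀ l ≤ k, IsUnit (u l)) (hC : ∀ l < k, C l ∈ IsLocalRing.maximalIdeal A) :
    Ideal.span {(p : A) ^ (2 * k + 1), x ^ (p ^ k)} ≤
      IsLocalRing.maximalIdeal A * Ideal.span {alphaEl p x k u C, betaEl p x k u C} := by
  classical
  have hp3 : 3 ≤ p := by
    have h2 := hp.two_le
    rcases hodd with ⟨t, ht⟩
    omega
  have hpA : (p : A) ∈ IsLocalRing.maximalIdeal A := by
    rw [hmax]; exact Ideal.subset_span (by simp)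
  have hxA : x ∈ IsLocalRing.maximalIdeal A := by
    rw [hmax]; exact Ideal.subset_span (by simp)
  have hppow : ∀ n, 1 ≤ n → (p:A)^n ∈ IsLocalRing.maximalIdeal A := by
    intro n hn
    rw [show n = (n-1)+1 from by omega, pow_succ]
    exact Ideal.mul_mem_left _ _ hpA
  have hxpow : ∀ n, 1 ≤ n → x^n ∈ IsLocalRing.maximalIdeal A := by
    intro n hn
    rw [show n = (n-1)+1 from by omega, pow_succ]
    exact Ideal.mul_mem_left _ _ hxA
  have hmain : (p:A)^(2*k+1) ∈
        IsLocalRing.maximalIdeal A * Ideal.span {alphaEl p x k u C, betaEl p x k u C}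
      ∧ x^(p^k) ∈
        IsLocalRing.maximalIdeal A * Ideal.span {alphaEl p x k u C, betaEl p x k u C} := by
    have hαJ : alphaEl p x k u C ∈ Ideal.span {alphaEl p x k u C, betaEl p x k u C} :=
      Ideal.subset_span (by simp)
    have hβJ : betaEl p x k u C ∈ Ideal.span {alphaEl p x k u C, betaEl p x k u C} :=
      Ideal.subset_span (by simp)
    rcases eq_or_lt_of_le hk with hk1|hk2
    · -- the case k = 1
      subst hk1
      obtain ⟨U0, hU0⟩ := hu 0 (by omega)
      obtain ⟨U1, hU1⟩ := hu 1 (by omega)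
      have hα : alphaEl p x 1 u C = u 0 * (p:A) := by
        rw [alpha_expand]
        rw [Finset.sum_range_succ, Finset.sum_range_succ, Finset.sum_range_zero]
        norm_num [EE_zero]
      have hβ : betaEl p x 1 u C = C 0 * (p:A) + u 1 * x^2 := by
        rw [beta_expand]
        rw [Finset.sum_range_succ, Finset.sum_range_succ, Finset.sum_range_zero]
        norm_num [EE_zero, EE_one]
      constructor
      · have e : (p:A)^(2*1+1) = ((p:A)^2 * ↑U0⁻¹) * alphaEl p x 1 u C := by
          rw [hα, ← hU0]
          have h0 : (↑U0⁻¹ : A) * ↑U0 = 1 := Units.inv_mul _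
          calc (p:A)^(2*1+1) = ((p:A)^2 * ((↑U0⁻¹ : A) * ↑U0)) * (p:A) := by rw [h0]; ring
          _ = ((p:A)^2 * ↑U0⁻¹) * (↑U0 * (p:A)) := by ring
        rw [e]
        exact Ideal.mul_mem_mul (Ideal.mul_mem_right _ _ (hppow 2 (by omega))) hαJ
      · have h0 : (↑U0⁻¹ : A) * ↑U0 = 1 := Units.inv_mul _
        have h1 : (↑U1⁻¹ : A) * ↑U1 = 1 := Units.inv_mul _
        have hxx : x^(p-2) * x^2 = x^p := by
          rw [← pow_add]; congr 1; omega
        have e : x^(p^1) = (x^(p-2) * ↑U1⁻¹) * betaEl p x 1 u C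
              + (-(x^(p-2) * (↑U1⁻¹ : A) * C 0 * ↑U0⁻¹)) * alphaEl p x 1 u C := by
          rw [hβ, hα, ← hU0, ← hU1, pow_one]
          linear_combination (-(x^(p-2) * x^2)) * h1 + (x^(p-2) * (↑U1⁻¹ : A) * C 0 * (p:A)) * h0 - hxx
        rw [e]
        refine Ideal.add_mem _ ?_ ?_
        · exact Ideal.mul_mem_mul (Ideal.mul_mem_right _ _ (hxpow (p-2) (by omega))) hβJ
        · refine Ideal.mul_mem_mul ?_ hαJ
          refine Submodule.neg_mem _ ?_
          exact Ideal.mul_mem_right _ _ (Ideal.mul_mem_left _ _ (hC 0 (by omega)))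
    · -- the case 2 ≤ k
      set mA := IsLocalRing.maximalIdeal A with hmA
      set α := alphaEl p x k u C with hαdef
      set β := betaEl p x k u C with hβdef
      set J := Ideal.span {α, β} with hJdef
      set W := mA * J with hWdef
      have hC0 : ∀ l, (if l < k then C l else 0) ∈ mA := by
        intro l
        split
        · exact hC l ‹_›
        · exact zero_mem _
      set KI : ℕ → A := fun i => (p:A)^((k-1-i)+(k-i)) * x^(EE p i + EE p i) with hKI
      set LG : ℕ → A := fun i => (p:A)^((k-1-i)+(k-(i+1))) * x^(EE p i + EE p (i+1)) with hLG
      set N : Submodule A (A ⧸ W) := Submodule.span A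
        ((fun i => W.mkQ (KI i)) '' (Set.Iio k) ∪ (fun i => W.mkQ (LG i)) '' (Set.Iio k)) with hN
      have hKIN : ∀ i, i < k → W.mkQ (KI i) ∈ N := by
        intro i hi
        exact Submodule.subset_span (Or.inl ⟨i, hi, rfl⟩)
      have hLGN : ∀ i, i < k → W.mkQ (LG i) ∈ N := by
        intro i hi
        exact Submodule.subset_span (Or.inr ⟨i, hi, rfl⟩)
      -- domination of a single non-pivot term
      have domterm : ∀ (c : A) (j l : ℕ), j < k → l < k + 1 →
          (c ∈ mA ∨ (l % 2 = j % 2 ∧ l ≠ j) ∨ (¬ l % 2 = j % 2 ∧ (j + 3 ≤ l ∨ l + 3 ≤ j))) →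
          W.mkQ (c * ((p:A)^((k-1-j)+(k-l)) * x^(EE p j + EE p l))) ∈ mA • N := by
        intro c j l hj hl hcase
        by_cases hpar : l % 2 = j % 2
        · set i := (j + l) / 2 with hidef
          have h2i : j + l = 2 * i := by omega
          have hik : i < k := by omega
          have hge : EE p i + EE p i ≤ EE p j + EE p l := by
            rcases le_total j l with hjl|hlj
            · have h := corI0 hp3 l (show j ≤ i from by omega) (show j + l = 2*i from h2i)
              omega
            · have h := corI0 hp3 j (show l ≤ i from by omega) (show l + j = 2*i from by omega)
              omega
          have hstrict : l ≠ j → EE p i + EE p i + 1 ≤ EE p j + EE p l := by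
            intro hne
            rcases le_total j l with hjl|hlj
            · have h := corI0 hp3 l (show j ≤ i from by omega) (show j + l = 2*i from h2i)
              omega
            · have h := corI0 hp3 j (show l ≤ i from by omega) (show l + j = 2*i from by omega)
              omega
          set s := (EE p j + EE p l) - (EE p i + EE p i) with hsdef
          have hxe : EE p j + EE p l = (EE p i + EE p i) + s := by omega
          have hpe : (k-1-j)+(k-l) = (k-1-i)+(k-i) := by omega
          have hcs : c * x ^ s ∈ mA := by
            rcases hcase with hc | ⟨_, hne⟩ | ⟨hne, _⟩
            · exact Ideal.mul_mem_right _ _ hc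
            · exact Ideal.mul_mem_left _ _ (hxpow s (by have := hstrict hne; omega))
            · exact absurd hpar hne
          have heq : c * ((p:A)^((k-1-j)+(k-l)) * x^(EE p j + EE p l)) = (c * x^s) * KI i := by
            simp only [hKI]
            rw [hpe, hxe, pow_add x]
            ring
          rw [heq, ← smul_eq_mul, map_smul]
          exact Submodule.smul_mem_smul hcs (hKIN i hik)
        · set i := (j + l) / 2 with hidef
          have h2i : j + l = 2 * i + 1 := by omega
          have hik : i < k := by omega
          have hge : EE p i + EE p (i+1) ≤ EE p j + EE p l := by
            rcases le_total j l with hjl|hlj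
            · have h := corG0 hp3 l (show j ≤ i from by omega) (show j + l = 2*i+1 from h2i)
              omega
            · have h := corG0 hp3 j (show l ≤ i from by omega) (show l + j = 2*i+1 from by omega)
              omega
          have hstrict : (j + 3 ≤ l ∨ l + 3 ≤ j) → EE p i + EE p (i+1) + 1 ≤ EE p j + EE p l := by
            intro hgap
            rcases le_total j l with hjl|hlj
            · have h := corG0 hp3 l (show j ≤ i from by omega) (show j + l = 2*i+1 from h2i)
              omega
            · have h := corG0 hp3 j (show l ≤ i from by omega) (show l + j = 2*i+1 from by omega)
              omega
          set s := (EE p j + EE p l) - (EE p i + EE p (i+1)) with hsdef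
          have hxe : EE p j + EE p l = (EE p i + EE p (i+1)) + s := by omega
          have hpe : (k-1-j)+(k-l) = (k-1-i)+(k-(i+1)) := by omega
          have hcs : c * x ^ s ∈ mA := by
            rcases hcase with hc | ⟨hpe', _⟩ | ⟨_, hgap⟩
            · exact Ideal.mul_mem_right _ _ hc
            · exact absurd hpe' hpar
            · exact Ideal.mul_mem_left _ _ (hxpow s (by have := hstrict hgap; omega))
          have heq : c * ((p:A)^((k-1-j)+(k-l)) * x^(EE p j + EE p l)) = (c * x^s) * LG i := by
            simp only [hLG]
            rw [hpe, hxe, pow_add x]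
            ring
          rw [heq, ← smul_eq_mul, map_smul]
          exact Submodule.smul_mem_smul hcs (hLGN i hik)
      -- the main relation-extraction engine
      have main : ∀ (j j0 : ℕ), j < k → j0 < k + 1 →
          (∀ l, l ∈ (Finset.range (k+1)).erase j0 →
            W.mkQ ((if l % 2 = j0 % 2 then u l else if l < k then C l else 0) *
              ((p:A)^((k-1-j)+(k-l)) * x^(EE p j + EE p l))) ∈ mA • N) →
          W.mkQ ((p:A)^((k-1-j)+(k-j0)) * x^(EE p j + EE p j0)) ∈ mA • N := by
        intro j j0 hj hj0 hterms
        have hexp : (if j0 % 2 = 0 then α else β) = ∑ l ∈ Finset.range (k+1),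
            (if l % 2 = j0 % 2 then u l else if l < k then C l else 0)
              * ((p:A)^(k-l) * x^(EE p l)) := by
          rcases Nat.mod_two_eq_zero_or_one j0 with h|h
          · rw [if_pos h]
            simp only [h]
            rw [hαdef]
            exact alpha_expand p x k u C
          · rw [if_neg (by omega)]
            simp only [h]
            rw [hβdef]
            exact beta_expand p x k u C
        have hγJ : (if j0 % 2 = 0 then α else β) ∈ J := by
          split
          · exact hαJ
          · exact hβJ
        have hμ : (p:A)^(k-1-j) * x^(EE p j) ∈ mA := by
          by_cases hj1 : j + 1 < k
          · exact Ideal.mul_mem_right _ _ (hppow _ (by omega))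
          · have h2 : 2 ≤ EE p j := EE_ge_two hp3 j (by omega)
            exact Ideal.mul_mem_left _ _ (hxpow _ (by omega))
        have hWμγ : ((p:A)^(k-1-j) * x^(EE p j)) * (if j0 % 2 = 0 then α else β) ∈ W := by
          rw [hWdef]
          exact Ideal.mul_mem_mul hμ hγJ
        have hsum : ((p:A)^(k-1-j) * x^(EE p j)) * (if j0 % 2 = 0 then α else β)
            = ∑ l ∈ Finset.range (k+1),
              (if l % 2 = j0 % 2 then u l else if l < k then C l else 0)
                * ((p:A)^((k-1-j)+(k-l)) * x^(EE p j + EE p l)) := by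
          rw [hexp, Finset.mul_sum]
          refine Finset.sum_congr rfl fun l hl => ?_
          rw [pow_add, pow_add]
          ring
        have hsplit := Finset.add_sum_erase (Finset.range (k+1))
          (fun l => (if l % 2 = j0 % 2 then u l else if l < k then C l else 0)
                * ((p:A)^((k-1-j)+(k-l)) * x^(EE p j + EE p l))) (Finset.mem_range.2 hj0)
        have hzero : W.mkQ (((p:A)^(k-1-j) * x^(EE p j)) * (if j0 % 2 = 0 then α else β)) = 0 := by
          rw [Submodule.mkQ_apply, Submodule.Quotient.mk_eq_zero]
          exact hWμγ
        have hpivot : W.mkQ ((u j0) * ((p:A)^((k-1-j)+(k-j0)) * x^(EE p j + EE p j0))) ∈ mA • N := by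
          have h1 : (u j0) * ((p:A)^((k-1-j)+(k-j0)) * x^(EE p j + EE p j0))
              = ((p:A)^(k-1-j) * x^(EE p j)) * (if j0 % 2 = 0 then α else β)
                - ∑ l ∈ (Finset.range (k+1)).erase j0,
                  (if l % 2 = j0 % 2 then u l else if l < k then C l else 0)
                    * ((p:A)^((k-1-j)+(k-l)) * x^(EE p j + EE p l)) := by
            rw [hsum, ← hsplit]
            have hbeta : ((fun l => (if l % 2 = j0 % 2 then u l else if l < k then C l else 0)
                * ((p:A)^((k-1-j)+(k-l)) * x^(EE p j + EE p l))) j0)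
                = u j0 * ((p:A)^((k-1-j)+(k-j0)) * x^(EE p j + EE p j0)) := by simp
            rw [if_pos (rfl : j0 % 2 = j0 % 2)]
            ring
          rw [h1, map_sub, hzero, zero_sub]
          refine Submodule.neg_mem _ ?_
          rw [map_sum]
          exact Submodule.sum_mem _ fun l hl => hterms l hl
        obtain ⟨U, hU⟩ := hu j0 (by omega)
        have h2 : W.mkQ ((p:A)^((k-1-j)+(k-j0)) * x^(EE p j + EE p j0))
            = (↑U⁻¹ : A) • W.mkQ ((u j0) * ((p:A)^((k-1-j)+(k-j0)) * x^(EE p j + EE p j0))) := by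
          rw [← hU]
          rw [show (↑U : A) * ((p:A)^((k-1-j)+(k-j0)) * x^(EE p j + EE p j0))
              = (↑U : A) • ((p:A)^((k-1-j)+(k-j0)) * x^(EE p j + EE p j0)) from rfl]
          rw [map_smul, smul_smul, Units.inv_mul, one_smul]
        rw [h2]
        exact Submodule.smul_mem _ _ hpivot
      -- the K-corner relations
      have relI : ∀ j, j < k → W.mkQ (KI j) ∈ mA • N := by
        intro j hj
        have hterm : ∀ l, l ∈ (Finset.range (k+1)).erase j →
            W.mkQ ((if l % 2 = j % 2 then u l else if l < k then C l else 0) *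
              ((p:A)^((k-1-j)+(k-l)) * x^(EE p j + EE p l))) ∈ mA • N := by
          intro l hl
          obtain ⟨hne, hlr⟩ := Finset.mem_erase.1 hl
          have hlk : l < k + 1 := Finset.mem_range.1 hlr
          by_cases hpl : l % 2 = j % 2
          · rw [if_pos hpl]
            exact domterm (u l) j l hj hlk (Or.inr (Or.inl ⟨hpl, hne⟩))
          · rw [if_neg hpl]
            exact domterm _ j l hj hlk (Or.inl (hC0 l))
        have h := main j j hj (by omega) hterm
        simpa only [hKI] using h
      -- the G-corner relation terms
      have relGterm : ∀ j l, j < k → l ∈ (Finset.range (k+1)).erase (j+1) →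
          (l + 1 = j → W.mkQ (LG l) ∈ mA • N) →
          W.mkQ ((if l % 2 = (j+1) % 2 then u l else if l < k then C l else 0) *
            ((p:A)^((k-1-j)+(k-l)) * x^(EE p j + EE p l))) ∈ mA • N := by
        intro j l hj hl hspecial
        obtain ⟨hne, hlr⟩ := Finset.mem_erase.1 hl
        have hlk : l < k + 1 := Finset.mem_range.1 hlr
        by_cases hpl : l % 2 = (j+1) % 2
        · rw [if_pos hpl]
          by_cases hlj : l + 1 = j
          · have hpe : (k-1-j)+(k-l) = (k-1-l)+(k-(l+1)) := by omega
            have hxe : EE p j + EE p l = EE p l + EE p (l+1) := by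
              rw [← hlj]
              omega
            have heq : (u l) * ((p:A)^((k-1-j)+(k-l)) * x^(EE p j + EE p l)) = (u l) * LG l := by
              simp only [hLG]
              rw [hpe, hxe]
            rw [heq, ← smul_eq_mul, map_smul]
            exact Submodule.smul_mem _ _ (hspecial hlj)
          · exact domterm (u l) j l hj hlk (Or.inr (Or.inr ⟨by omega, by omega⟩))
        · rw [if_neg hpl]
          exact domterm _ j l hj hlk (Or.inl (hC0 l))
      -- the G-corner relations, by induction
      have relG : ∀ j, j < k → W.mkQ (LG j) ∈ mA • N := by
        intro j
        induction j with
        | zero =>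
            intro hj
            have h := main 0 (0+1) hj (by omega)
              (fun l hl => relGterm 0 l hj hl (fun h1 => absurd h1 (by omega)))
            simpa only [hLG] using h
        | succ n ih =>
            intro hj
            have h := main (n+1) ((n+1)+1) hj (by omega)
              (fun l hl => relGterm (n+1) l hj hl
                (fun h1 => by
                  have hln : l = n := by omega
                  rw [hln]
                  exact ih (by omega)))
            simpa only [hLG] using h
      -- Nakayama
      have hNle : N ≤ mA • N := by
        rw [hN]
        rw [Submodule.span_le]
        rintro z hz
        rcases hz with ⟨i, hi, rfl⟩ | ⟨i, hi, rfl⟩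
        · exact relI i hi
        · exact relG i hi
      have hFG : N.FG := by
        rw [hN]
        apply Submodule.fg_span
        exact Set.Finite.union ((Set.finite_Iio k).image _) ((Set.finite_Iio k).image _)
      have hbot : N = ⊥ :=
        Submodule.eq_bot_of_le_smul_of_le_jacobson_bot mA N hFG hNle
          (IsLocalRing.maximalIdeal_le_jacobson ⊥)
      have hKIW : ∀ i, i < k → KI i ∈ W := by
        intro i hi
        have h1 := hKIN i hi
        rw [hbot, Submodule.mem_bot] at h1
        rw [Submodule.mkQ_apply, Submodule.Quotient.mk_eq_zero] at h1
        exact h1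
      have hLGW : ∀ i, i < k → LG i ∈ W := by
        intro i hi
        have h1 := hLGN i hi
        rw [hbot, Submodule.mem_bot] at h1
        rw [Submodule.mkQ_apply, Submodule.Quotient.mk_eq_zero] at h1
        exact h1
      constructor
      · have e : (p:A)^(2*k+1) = (p:A)^2 * KI 0 := by
          simp only [hKI]
          rw [show 2*k+1 = 2 + ((k-1-0)+(k-0)) from by omega, pow_add]
          simp [EE_zero]
        rw [e]
        exact Ideal.mul_mem_left _ _ (hKIW 0 (by omega))
      · have hEsum : EE p (k-1) + EE p k ≤ p ^ k := by
          have h1 := EE_consec_sum p (k-1)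
          have h2 := geom2 hp3 k
          rw [show (k-1)+1 = k from by omega] at h1
          omega
        have e : x^(p^k) = x^(p^k - (EE p (k-1) + EE p k)) * LG (k-1) := by
          simp only [hLG]
          rw [show (k-1)+1 = k from by omega]
          rw [show (k-1-(k-1)) + (k-k) = 0 from by omega, pow_zero, one_mul, ← pow_add]
          congr 1
          omega
        rw [e]
        exact Ideal.mul_mem_left _ _ (hLGW (k-1) (by omega))
  rw [Ideal.span_le]
  rintro z hz
  simp only [Set.mem_insert_iff, Set.mem_singleton_iff] at hz
  rcases hz with rfl|rfl
  · exact hmain.1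
  · exact hmain.2

end
end
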